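/- arXiv:1804.05516 — 8 statements merged into one kernel-verified Lean document; each statement's English description precedes it below -/
import Mathlib

section
/- Let q = p^m with p an odd prime and m odd. Then the number of elements w ∈ GF(q)* that are nonzero squares and satisfy Tr_{q/p}(w) = 0 equals (p^{m-1} - 1)/2. -/
open Finset

private lemma geom_aux (k m : ℕ) : (k + 1) ^ m = k * (∑ i ∈ range m, (k+1) ^ i) + 1 := by
  induction m with
  | zero => simp
  | succ n ih =>
    rw [geom_sum_succ', pow_succ, ih]; ring

/-- Let `q = p^m` with `p` an odd prime and `m` odd. The number of nonzero squares
`w ∈ GF(q)*` with `Tr_{q/p}(w) = 0` equals `(p^(m-1) - 1)/2`. -/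
theorem stmt4 (p m : ℕ) [Fact p.Prime] (hp : Odd p) (hm : Odd m)
    {F : Type*} [Field F] [Fintype F] [Algebra (ZMod p) F]
    (hcard : Fintype.card F = p ^ m) :
    Nat.card {w : F // w ≠ 0 ∧ IsSquare w ∧ Algebra.trace (ZMod p) F w = 0} =
      (p ^ (m - 1) - 1) / 2 := by
  classical
  set T := Algebra.trace (ZMod p) F with hT
  have hpprime := (Fact.out : p.Prime)
  have hm1 : 1 ≤ m := hm.pos
  have hp2 : p ≠ 2 := by rintro rfl; simp [Nat.odd_iff] at hp
  have hp3 : 3 ≤ p := by rcases hpprime.two_le.lt_or_eq with h | h; omega; omega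
  have hpodd : p % 2 = 1 := Nat.odd_iff.mp hp
  have hchar : CharP F p := charP_of_injective_algebraMap (algebraMap (ZMod p) F).injective p
  have hring : ringChar F = p := ringChar.eq F p
  have hF2 : ringChar F ≠ 2 := by rw [hring]; exact hp2
  have : Fact (2 < p) := ⟨by omega⟩
  have hne11 : (-1 : F) ≠ 1 := CharP.neg_one_ne_one F p
  -- trace is surjective
  have : FiniteDimensional (ZMod p) F := Module.Finite.of_finite
  have hsurj : Function.Surjective T := Algebra.trace_surjective _ _
  -- K = number of trace-zero elements
  set K := (univ.filter fun x : F => T x = 0).card with hKdef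
  have hfiber : ∀ c : ZMod p, (univ.filter fun x : F => T x = c).card = K := by
    intro c
    obtain ⟨e, he⟩ := hsurj c
    refine card_nbij' (fun x => x - e) (fun x => x + e) ?_ ?_ ?_ ?_ <;>
      intro x hx <;> simp only [Finset.mem_coe, mem_filter, mem_univ, true_and] at hx ⊢ <;>
      simp [map_sub, map_add, hx, he]
  have hKp : K * p = p ^ m := by
    have h1 : (univ : Finset F).card = ∑ c : ZMod p, (univ.filter fun x : F => T x = c).card :=
      Finset.card_eq_sum_card_fiberwise (by simp)
    rw [Finset.card_univ, hcard] at h1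
    rw [h1]
    simp [hfiber, Finset.sum_const, Finset.card_univ, ZMod.card, mul_comm]
  have hK : K = p ^ (m - 1) := by
    have : p ^ m = p ^ (m-1) * p := by
      rw [← pow_succ]; congr 1; omega
    rw [this] at hKp
    exact Nat.eq_of_mul_eq_mul_right hpprime.pos hKp
  -- a nonsquare s in F coming from ZMod p
  have hZ2 : ringChar (ZMod p) ≠ 2 := by
    rw [ZMod.ringChar_zmod_n]; exact hp2
  obtain ⟨t, ht⟩ := FiniteField.exists_nonsquare (F := ZMod p) hZ2
  have ht0 : t ≠ 0 := by rintro rfl; exact ht ⟨0, by simp⟩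
  have htpow : t ^ (p / 2) = -1 := by
    rcases FiniteField.pow_dichotomy hZ2 ht0 with h | h
    · rw [ZMod.card] at h
      exact absurd ((FiniteField.isSquare_iff hZ2 ht0).mpr (by rwa [ZMod.card])) ht
    · rwa [ZMod.card] at h
  set s : F := algebraMap (ZMod p) F t with hsdef
  have hs0 : s ≠ 0 := by
    intro h
    apply ht0
    apply (algebraMap (ZMod p) F).injective
    rw [map_zero, ← hsdef]; exact h
  -- card F / 2 = (p/2) * Σ with Σ odd
  set Sg := ∑ i ∈ range m, p ^ i with hSgdef
  have hSgodd : Sg % 2 = 1 := by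
    have h1 : ∀ i, p ^ i % 2 = 1 := fun i => Nat.odd_iff.mp (hp.pow)
    rw [hSgdef, Finset.sum_nat_mod]
    simp only [h1, Finset.sum_const, Finset.card_range, smul_eq_mul, mul_one]
    exact Nat.odd_iff.mp hm
  have hgeom : p ^ m = (p - 1) * Sg + 1 := by
    have := geom_aux (p - 1) m
    have hp1 : p - 1 + 1 = p := by omega
    rw [hp1] at this; exact this
  have hq2 : Fintype.card F / 2 = (p / 2) * Sg := by
    have h2 : p - 1 = 2 * (p / 2) := by omega
    rw [hcard]
    have : p ^ m = 2 * ((p/2) * Sg) + 1 := by rw [hgeom, h2]; ring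
    omega
  have hspow : s ^ (Fintype.card F / 2) = -1 := by
    rw [hq2, pow_mul, hsdef, ← map_pow, htpow]
    have : (algebraMap (ZMod p) F) (-1) = -1 := by simp
    rw [this]
    exact Odd.neg_one_pow (Nat.odd_iff.mpr hSgodd)
  have hsns : ¬ IsSquare s := by
    rw [FiniteField.isSquare_iff hF2 hs0, hspow]
    exact hne11
  -- every nonzero a is b^2 or s * b^2
  have hclass : ∀ a : F, a ≠ 0 → ∃ b : F, b ≠ 0 ∧ (a = b ^ 2 ∨ a = s * b ^ 2) := by
    intro a ha
    by_cases h : IsSquare a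
    · obtain ⟨b, rfl⟩ := h
      have hb : b ≠ 0 := fun hb => ha (by simp [hb])
      exact ⟨b, hb, Or.inl (sq b).symm⟩
    · have hapow : a ^ (Fintype.card F / 2) = -1 := by
        rcases FiniteField.pow_dichotomy hF2 ha with h' | h'
        · exact absurd ((FiniteField.isSquare_iff hF2 ha).mpr h') h
        · exact h'
      have hsq : IsSquare (s⁻¹ * a) := by
        have hne : s⁻¹ * a ≠ 0 := by
          simp [mul_ne_zero, inv_ne_zero hs0, ha]
        rw [FiniteField.isSquare_iff hF2 hne, mul_pow, inv_pow, hspow, hapow]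
        norm_num
      obtain ⟨b, hb⟩ := hsq
      have hbne : b ≠ 0 := by
        rintro rfl
        simp at hb
        rcases hb with hb | hb
        · exact hs0 hb
        · exact ha hb
      refine ⟨b, hbne, Or.inr ?_⟩
      have : a = s * (s⁻¹ * a) := by field_simp
      rw [this, hb]; ring
  -- multiplication bijection
  have hmul : ∀ (b : F), b ≠ 0 → ∀ (Q : F → Prop) (_ : DecidablePred Q),
      (univ.filter fun x : F => Q (b * x)).card = (univ.filter fun x : F => Q x).card := by
    intro b hb Q _
    refine card_nbij' (fun x => b * x) (fun y => b⁻¹ * y) ?_ ?_ ?_ ?_ <;>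
      intro x hx <;> simp only [Finset.mem_coe, mem_filter, mem_univ, true_and] at hx ⊢
    · exact hx
    · rwa [← mul_assoc, mul_inv_cancel₀ hb, one_mul]
    · rw [← mul_assoc, inv_mul_cancel₀ hb, one_mul]
    · rw [← mul_assoc, mul_inv_cancel₀ hb, one_mul]
  set N := (univ.filter fun x : F => T (x ^ 2) = 0).card with hNdef
  -- invariance of the count
  have hNinv : ∀ a : F, a ≠ 0 →
      (univ.filter fun x : F => T (a * x ^ 2) = 0).card = N := by
    intro a ha
    obtain ⟨b, hb, hab | hab⟩ := hclass a ha
    · subst hab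
      have := hmul b hb (fun y => T (y ^ 2) = 0) (by infer_instance)
      rw [hNdef, ← this]
      congr 1; apply Finset.filter_congr; intro x _
      simp [mul_pow]
    · subst hab
      have h1 : ∀ x : F, (T (s * b ^ 2 * x ^ 2) = 0) ↔ (T ((b * x) ^ 2) = 0) := by
        intro x
        have : s * b ^ 2 * x ^ 2 = t • ((b * x) ^ 2) := by
          rw [Algebra.smul_def, ← hsdef]; ring
        rw [this, map_smul, smul_eq_mul, mul_eq_zero]
        simp [ht0]
      have h2 : (univ.filter fun x : F => T (s * b ^ 2 * x ^ 2) = 0).card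
          = (univ.filter fun x : F => T ((b * x) ^ 2) = 0).card := by
        congr 1; apply Finset.filter_congr; intro x _; simp [h1 x]
      rw [h2]
      exact hmul b hb (fun y => T (y ^ 2) = 0) (by infer_instance)
  -- double counting
  have hA : (univ.filter fun a : F => a ≠ 0).card = p ^ m - 1 := by
    rw [Finset.filter_ne', Finset.card_erase_of_mem (mem_univ 0), Finset.card_univ, hcard]
  have hcount1 : ∑ a ∈ univ.filter (fun a : F => a ≠ 0),
      (univ.filter fun x : F => T (a * x ^ 2) = 0).card = (p ^ m - 1) * N := by
    rw [Finset.sum_congr rfl (fun a ha => hNinv a (by simpa using ha))]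
    rw [Finset.sum_const, hA, smul_eq_mul]
  have hcount2 : ∑ a ∈ univ.filter (fun a : F => a ≠ 0),
      (univ.filter fun x : F => T (a * x ^ 2) = 0).card
      = (p ^ m - 1) + (p ^ m - 1) * (K - 1) := by
    have swap : ∑ a ∈ univ.filter (fun a : F => a ≠ 0),
        (univ.filter fun x : F => T (a * x ^ 2) = 0).card
        = ∑ x : F, ((univ.filter fun a : F => a ≠ 0).filter
            fun a => T (a * x ^ 2) = 0).card := by
      simp only [Finset.card_filter]
      exact Finset.sum_comm
    rw [swap]
    have hzero : ((univ.filter fun a : F => a ≠ 0).filter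
        fun a => T (a * (0:F) ^ 2) = 0).card = p ^ m - 1 := by
      have h0 : ∀ a : F, a ∈ (univ.filter fun a : F => a ≠ 0) → T (a * (0:F) ^ 2) = 0 := by
        intro a _; simp
      rw [Finset.filter_true_of_mem h0]
      exact hA
    have hxne : ∀ x : F, x ≠ 0 → ((univ.filter fun a : F => a ≠ 0).filter
        fun a => T (a * x ^ 2) = 0).card = K - 1 := by
      intro x hx
      have hx2 : x ^ 2 ≠ 0 := pow_ne_zero 2 hx
      have : ((univ.filter fun a : F => a ≠ 0).filter fun a => T (a * x ^ 2) = 0).card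
          = ((univ.filter fun b : F => T b = 0).erase 0).card := by
        refine card_nbij' (fun a => a * x ^ 2) (fun b => b * (x ^ 2)⁻¹) ?_ ?_ ?_ ?_ <;>
          intro y hy <;>
          simp only [Finset.mem_coe, mem_filter, mem_univ, true_and, Finset.mem_erase, ne_eq] at hy ⊢
        · exact ⟨mul_ne_zero hy.1 hx2, hy.2⟩
        · constructor
          · exact mul_ne_zero hy.1 (inv_ne_zero hx2)
          · rw [mul_assoc, inv_mul_cancel₀ hx2, mul_one]; exact hy.2
        · rw [mul_assoc, mul_inv_cancel₀ hx2, mul_one]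
        · rw [mul_assoc, inv_mul_cancel₀ hx2, mul_one]
      rw [this, Finset.card_erase_of_mem (by simp), ← hKdef]
    calc ∑ x : F, ((univ.filter fun a : F => a ≠ 0).filter
            fun a => T (a * x ^ 2) = 0).card
        = ((univ.filter fun a : F => a ≠ 0).filter
            fun a => T (a * (0:F) ^ 2) = 0).card
          + ∑ x ∈ univ.erase 0, ((univ.filter fun a : F => a ≠ 0).filter
            fun a => T (a * x ^ 2) = 0).card := by
          rw [← Finset.add_sum_erase _ _ (mem_univ (0:F))]
      _ = (p ^ m - 1) + (p ^ m - 1) * (K - 1) := by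
          rw [hzero]
          congr 1
          rw [Finset.sum_congr rfl (fun x hx => hxne x (Finset.ne_of_mem_erase hx)),
            Finset.sum_const, Finset.card_erase_of_mem (mem_univ 0), Finset.card_univ, hcard,
            smul_eq_mul]
  -- deduce N = K
  have hq1 : 1 ≤ p ^ m := Nat.one_le_pow _ _ hpprime.pos
  have hq3 : 2 ≤ p ^ m := by
    calc 2 ≤ p := hpprime.two_le
    _ = p ^ 1 := (pow_one p).symm
    _ ≤ p ^ m := Nat.pow_le_pow_right hpprime.pos hm1
  have hK1 : 1 ≤ K := by
    rw [hKdef]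
    exact Finset.card_pos.mpr ⟨0, by simp⟩
  have hNK : N = K := by
    obtain ⟨K', hK'⟩ : ∃ K', K = K' + 1 := ⟨K - 1, by omega⟩
    have h := hcount1.symm.trans hcount2
    rw [hK'] at h
    simp only [Nat.add_sub_cancel] at h
    have h2 : (p ^ m - 1) * N = (p ^ m - 1) * (K' + 1) := by
      rw [Nat.mul_add, Nat.mul_one]; omega
    have hq0 : 0 < p ^ m - 1 := by omega
    rw [hK']
    exact Nat.eq_of_mul_eq_mul_left hq0 h2
  -- relate N to the target count
  set M := (univ.filter fun w : F => w ≠ 0 ∧ IsSquare w ∧ T w = 0).card with hMdef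
  have hAN : (univ.filter fun x : F => x ≠ 0 ∧ T (x ^ 2) = 0).card = N - 1 := by
    have : (univ.filter fun x : F => x ≠ 0 ∧ T (x ^ 2) = 0)
        = (univ.filter fun x : F => T (x ^ 2) = 0).erase 0 := by
      ext x; simp [and_comm]
    rw [this, Finset.card_erase_of_mem (by simp), ← hNdef]
  have h2M : (univ.filter fun x : F => x ≠ 0 ∧ T (x ^ 2) = 0).card = 2 * M := by
    rw [Finset.card_eq_sum_card_fiberwise
      (f := fun x : F => x ^ 2)
      (t := univ.filter fun w : F => w ≠ 0 ∧ IsSquare w ∧ T w = 0)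
      (fun x hx => by
        simp only [Finset.mem_coe, mem_filter, mem_univ, true_and] at hx ⊢
        exact ⟨pow_ne_zero 2 hx.1, ⟨x, (sq x)⟩, hx.2⟩)]
    rw [Finset.sum_congr rfl, Finset.sum_const, hMdef, smul_eq_mul, mul_comm]
    intro w hw
    simp only [mem_filter, mem_univ, true_and] at hw
    obtain ⟨hw0, ⟨y, hy⟩, hwT⟩ := hw
    have hy0 : y ≠ 0 := fun h => hw0 (by simp [hy, h])
    have hyny : y ≠ -y := by
      intro h
      have : (2 : F) * y = 0 := by rw [two_mul]; linear_combination h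
      rcases mul_eq_zero.mp this with h2 | h2
      · have : ((2 : ℕ) : F) ≠ 0 := by
          have := (CharP.cast_eq_zero_iff F p 2)
          intro hc
          have hd := this.mp (by exact_mod_cast hc)
          have := Nat.le_of_dvd (by norm_num) hd
          omega
        exact this (by exact_mod_cast h2)
      · exact hy0 h2
    have hfib : ((univ.filter fun x : F => x ≠ 0 ∧ T (x ^ 2) = 0).filter
        fun x => x ^ 2 = w) = {y, -y} := by
      ext x
      simp only [Finset.mem_filter, mem_univ, true_and, Finset.mem_insert,
        Finset.mem_singleton]
      constructor
      · rintro ⟨⟨hx0, hxT⟩, hxw⟩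
        have hxx : x * x = y * y := by
          calc x * x = x ^ 2 := (sq x).symm
            _ = w := hxw
            _ = y * y := hy
        exact mul_self_eq_mul_self_iff.mp hxx
      · rintro (rfl | rfl)
        · refine ⟨⟨hy0, ?_⟩, ?_⟩
          · rw [sq, ← hy]; exact hwT
          · rw [sq]; exact hy.symm
        · refine ⟨⟨neg_ne_zero.mpr hy0, ?_⟩, ?_⟩
          · rw [neg_sq, sq, ← hy]; exact hwT
          · rw [neg_sq, sq]; exact hy.symm
    rw [hfib, Finset.card_insert_of_notMem (by simpa using hyny), Finset.card_singleton]
  -- finish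
  have hNat : Nat.card {w : F // w ≠ 0 ∧ IsSquare w ∧ T w = 0} = M := by
    rw [Nat.card_eq_fintype_card, Fintype.card_subtype]
  rw [hNat]
  rw [hNK, hK] at hAN
  rw [h2M] at hAN
  have hpm1 : 1 ≤ p ^ (m - 1) := Nat.one_le_pow _ _ hpprime.pos
  omega
end

section
/- Let q = p^m with p an odd prime and m odd. Then the number of elements w ∈ GF(q)* that are nonzero squares and satisfy Tr_{q/p}(w) ≠ 0 equals p^{m-1}(p-1)/2. -/
/-- Let `q = p^m` with `p` an odd prime and `m` odd. The number of nonzero squares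
`w ∈ GF(q)*` with `Tr_{q/p}(w) ≠ 0` equals `p^(m-1)(p-1)/2`. -/
theorem stmt5 (p m : ℕ) [Fact p.Prime] (hp : Odd p) (hm : Odd m)
    {F : Type*} [Field F] [Fintype F] [Algebra (ZMod p) F]
    (hcard : Fintype.card F = p ^ m) :
    Nat.card {w : F // w ≠ 0 ∧ IsSquare w ∧ Algebra.trace (ZMod p) F w ≠ 0} =
      p ^ (m - 1) * (p - 1) / 2 := by
  classical
  have hpprime : p.Prime := Fact.out
  have hp2 : p ≠ 2 := by rintro rfl; exact (Nat.not_odd_iff_even.mpr even_two) hp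
  have hp2' : 2 < p := lt_of_le_of_ne hpprime.two_le (Ne.symm hp2)
  have hm1 : 1 ≤ m := hm.pos
  have hfd : FiniteDimensional (ZMod p) F := Module.Finite.of_finite
  have hinj : Function.Injective (algebraMap (ZMod p) F) := (algebraMap (ZMod p) F).injective
  have hchar : CharP F p := charP_of_injective_algebraMap hinj p
  have hF2 : ringChar F ≠ 2 := by
    rw [ringChar.eq F p]; exact hp2
  set Tr := Algebra.trace (ZMod p) F with hTrdef
  -- a nonsquare in ZMod p
  obtain ⟨a, ha⟩ := FiniteField.exists_nonsquare
    (F := ZMod p) (by rw [ZMod.ringChar_zmod_n]; exact hp2)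
  have ha0 : a ≠ 0 := by rintro rfl; exact ha (IsSquare.zero)
  set b := algebraMap (ZMod p) F a with hbdef
  have hb0 : b ≠ 0 := by
    simp only [hbdef, ne_eq, map_eq_zero]; exact ha0
  -- geometric sum
  set s := ∑ i ∈ Finset.range m, p ^ i with hsdef
  have hgeom : (p - 1) * s = p ^ m - 1 := by
    have h1 : ((s : ℤ)) * ((p : ℤ) - 1) = (p : ℤ) ^ m - 1 := by
      have := geom_sum_mul (p : ℤ) m
      simpa [hsdef] using this
    have hple : (1 : ℤ) ≤ (p : ℤ) := by exact_mod_cast hpprime.one_lt.le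
    have hpm : (1 : ℕ) ≤ p ^ m := Nat.one_le_pow _ _ hpprime.pos
    have : ((p - 1) * s : ℕ) = ((p ^ m - 1 : ℕ) : ℤ) := by
      push_cast [Nat.cast_sub hpprime.one_lt.le, Nat.cast_sub hpm]
      linarith [h1]
    exact_mod_cast this
  have hsodd : Odd s := by
    have : (s : ZMod 2) = 1 := by
      rw [hsdef]
      push_cast
      have hp1 : (p : ZMod 2) = 1 := by
        have : (p : ZMod 2) = ((p % 2 : ℕ) : ZMod 2) := by
          rw [ZMod.natCast_mod]
        rw [this, Nat.odd_iff.mp hp]; norm_num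
      rw [hp1]
      simp only [one_pow, Finset.sum_const, Finset.card_range, nsmul_eq_mul, mul_one]
      have : (m : ZMod 2) = ((m % 2 : ℕ) : ZMod 2) := by rw [ZMod.natCast_mod]
      rw [this, Nat.odd_iff.mp hm]; norm_num
    rw [Nat.odd_iff]
    by_contra h
    have h2 : (2:ℕ) ∣ s := Nat.dvd_of_mod_eq_zero (by omega)
    have h0 : (s : ZMod 2) = 0 := (ZMod.natCast_eq_zero_iff s 2).mpr h2
    rw [h0] at this
    exact one_ne_zero this.symm
  -- a ^ (p/2) = -1
  have hapow : a ^ (p / 2) = -1 := by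
    rcases ZMod.pow_div_two_eq_neg_one_or_one p ha0 with h | h
    · exact absurd ((ZMod.euler_criterion p ha0).mpr h) ha
    · exact h
  -- b is not a square
  have hbns : ¬ IsSquare b := by
    rintro ⟨y, hy⟩
    have hy0 : y ≠ 0 := by rintro rfl; simp at hy; exact hb0 hy
    have h2e : 2 * (p / 2 * s) = p ^ m - 1 := by
      have := Nat.two_mul_odd_div_two (Nat.odd_iff.mp hp)
      rw [← mul_assoc, this, hgeom]
    have h1 : b ^ (p / 2 * s) = -1 := by
      rw [hbdef, ← map_pow, pow_mul, hapow, hsodd.neg_one_pow, map_neg, map_one]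
    have h2 : b ^ (p / 2 * s) = 1 := by
      rw [hy, ← sq, ← pow_mul, h2e, ← hcard]
      exact FiniteField.pow_card_sub_one_eq_one y hy0
    rw [h1] at h2
    haveI : Fact (2 < p) := ⟨hp2'⟩
    exact CharP.neg_one_ne_one F p h2
  -- quadratic character facts
  have hχb : quadraticChar F b = -1 := (quadraticChar_neg_one_iff_not_isSquare).mpr hbns
  have hkey : ∀ w : F, w ≠ 0 → (IsSquare (b * w) ↔ ¬ IsSquare w) := by
    intro w hw
    have hbw : b * w ≠ 0 := mul_ne_zero hb0 hw
    constructor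
    · intro hsq hsqw
      have h1 : quadraticChar F (b * w) = 1 := (quadraticChar_one_iff_isSquare hbw).mpr hsq
      have h2 : quadraticChar F w = 1 := (quadraticChar_one_iff_isSquare hw).mpr hsqw
      rw [map_mul, hχb, h2] at h1
      norm_num at h1
    · intro hsqw
      have h2 : quadraticChar F w = -1 := (quadraticChar_neg_one_iff_not_isSquare).mpr hsqw
      have : quadraticChar F (b * w) = 1 := by rw [map_mul, hχb, h2]; ring
      exact (quadraticChar_one_iff_isSquare hbw).mp this
  -- trace facts
  have hTr0 : ∀ w : F, Tr w ≠ 0 → w ≠ 0 := by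
    rintro w h rfl; exact h (map_zero _)
  have hTrb : ∀ w : F, Tr (b * w) = a * Tr w := by
    intro w
    rw [hbdef, ← Algebra.smul_def, map_smul, smul_eq_mul]
  -- kernel cardinality
  have hsurj : Function.Surjective Tr := Algebra.trace_surjective (ZMod p) F
  have hker : Nat.card (LinearMap.ker Tr) = p ^ (m - 1) := by
    have h1 := Submodule.card_eq_card_quotient_mul_card (LinearMap.ker Tr)
    have h2 : Nat.card (F ⧸ LinearMap.ker Tr) = p := by
      rw [Nat.card_congr (LinearMap.quotKerEquivOfSurjective Tr hsurj).toEquiv,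
        Nat.card_eq_fintype_card, ZMod.card]
    rw [h2, Nat.card_eq_fintype_card, hcard] at h1
    have h3 : p ^ m = p * p ^ (m - 1) := by
      rw [← pow_succ']
      congr 1; omega
    rw [h3, mul_comm (Nat.card (LinearMap.ker Tr)) p] at h1
    exact (Nat.eq_of_mul_eq_mul_left hpprime.pos h1.symm)
  -- Finset counting
  set S := Finset.univ.filter (fun w : F => IsSquare w ∧ Tr w ≠ 0) with hSdef
  set N := Finset.univ.filter (fun w : F => ¬ IsSquare w ∧ Tr w ≠ 0) with hNdef
  have hSN : S.card = N.card := by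
    apply Finset.card_bij (fun w _ => b * w)
    · intro w hw
      simp only [hSdef, Finset.mem_filter, Finset.mem_univ, true_and] at hw
      simp only [hNdef, Finset.mem_filter, Finset.mem_univ, true_and]
      have hw0 := hTr0 w hw.2
      refine ⟨?_, ?_⟩
      · intro hsq
        exact (hkey w hw0).mp hsq hw.1
      · rw [hTrb]; exact mul_ne_zero ha0 hw.2
    · intro w₁ _ w₂ _ h
      exact mul_left_cancel₀ hb0 h
    · intro v hv
      simp only [hNdef, Finset.mem_filter, Finset.mem_univ, true_and] at hv
      refine ⟨b⁻¹ * v, ?_, by field_simp⟩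
      simp only [hSdef, Finset.mem_filter, Finset.mem_univ, true_and]
      have hv0 := hTr0 v hv.2
      have hbv0 : b⁻¹ * v ≠ 0 := mul_ne_zero (inv_ne_zero hb0) hv0
      constructor
      · by_contra hns
        have := (hkey (b⁻¹ * v) hbv0).mpr hns
        rw [show b * (b⁻¹ * v) = v by field_simp] at this
        exact hv.1 this
      · have : Tr (b * (b⁻¹ * v)) = a * Tr (b⁻¹ * v) := hTrb _
        rw [show b * (b⁻¹ * v) = v by field_simp] at this
        intro h0
        rw [h0, mul_zero] at this
        exact hv.2 this
  have hAcard : (Finset.univ.filter (fun w : F => Tr w ≠ 0)).card = p ^ m - p ^ (m - 1) := by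
    have h1 := Finset.card_filter_add_card_filter_not
      (s := (Finset.univ : Finset F)) (p := fun w => Tr w = 0)
    have h2 : (Finset.univ.filter (fun w : F => Tr w = 0)).card = p ^ (m - 1) := by
      rw [← hker, Nat.card_eq_fintype_card, ← Fintype.card_subtype]
      apply Fintype.card_congr
      exact Equiv.subtypeEquivRight (fun x => by simp [LinearMap.mem_ker])
    have h3 : (Finset.univ : Finset F).card = p ^ m := by
      rw [Finset.card_univ, hcard]
    simp only [ne_eq, h2, h3] at h1 ⊢
    omega
  have hsplit : S.card + N.card = p ^ m - p ^ (m - 1) := by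
    rw [← hAcard]
    have := Finset.card_filter_add_card_filter_not
      (s := Finset.univ.filter (fun w : F => Tr w ≠ 0)) (p := fun w : F => IsSquare w)
    rw [Finset.filter_filter, Finset.filter_filter] at this
    rw [hSdef, hNdef]
    rw [← this]
    congr 1
    · congr 1
      ext w
      simp only [Finset.mem_filter, Finset.mem_univ, true_and]
      tauto
    · congr 1
      ext w
      simp only [Finset.mem_filter, Finset.mem_univ, true_and]
      tauto
  -- identify Nat.card of the subtype with S.card
  have hfinal : Nat.card {w : F // w ≠ 0 ∧ IsSquare w ∧ Tr w ≠ 0} = S.card := by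
    rw [Nat.card_eq_fintype_card, Fintype.card_subtype, hSdef]
    congr 1
    ext w
    simp only [Finset.mem_filter, Finset.mem_univ, true_and]
    constructor
    · intro h; exact ⟨h.2.1, h.2.2⟩
    · intro h; exact ⟨hTr0 w h.2, h.1, h.2⟩
  rw [hfinal]
  have hpow : p ^ m - p ^ (m - 1) = p ^ (m - 1) * (p - 1) := by
    have h3 : p ^ m = p ^ (m - 1) * p := by
      rw [← pow_succ]; congr 1; omega
    rw [h3, Nat.mul_sub, mul_one]
  omega
end

section
/- Let q = p^m with p an odd prime and m odd. Then the number of non-square elements w ∈ GF(q)* with Tr_{q/p}(w) = 0 equals (p^{m-1} - 1)/2, and the number of non-squares with Tr_{q/p}(w) ≠ 0 equals p^{m-1}(p-1)/2. -/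
open Finset

section Aux

variable (p m : ℕ) [Fact p.Prime] {F : Type*} [Field F] [Fintype F] [Algebra (ZMod p) F]

lemma aux_ker_card (hcard : Fintype.card F = p ^ m) :
    Fintype.card {w : F // Algebra.trace (ZMod p) F w = 0} * p = p ^ m := by
  classical
  have : FiniteDimensional (ZMod p) F := Module.Finite.of_finite
  obtain ⟨z, hz⟩ := Algebra.trace_surjective (ZMod p) F 1
  set f := Algebra.trace (ZMod p) F with hf
  let e : F ≃ {w : F // f w = 0} × ZMod p :=
    { toFun := fun x => (⟨x - f x • z, by simp [map_sub, map_smul, hz, smul_eq_mul]⟩, f x)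
      invFun := fun k => k.1.1 + k.2 • z
      left_inv := fun x => by simp
      right_inv := fun k => by
        have h1 : f k.1.1 = 0 := k.1.2
        simp [map_add, map_smul, h1, hz, smul_eq_mul] }
  have := Fintype.card_congr e
  rw [Fintype.card_prod, ZMod.card, hcard] at this
  omega

end Aux

section Aux2

variable (p m : ℕ) [Fact p.Prime] {F : Type*} [Field F] [Fintype F] [Algebra (ZMod p) F]

lemma aux_finrank (hcard : Fintype.card F = p ^ m) : Module.finrank (ZMod p) F = m := by
  have h := Module.card_eq_pow_finrank (K := ZMod p) (V := F)
  rw [hcard, ZMod.card] at h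
  exact (Nat.pow_right_injective (Fact.out (p := p.Prime)).two_le h.symm)

lemma aux_nonsquare (hm : Odd m) (hcard : Fintype.card F = p ^ m)
    {c₀ : ZMod p} (hc₀ : ¬ IsSquare c₀) :
    ¬ IsSquare (algebraMap (ZMod p) F c₀) := by
  intro hsq
  have : FiniteDimensional (ZMod p) F := Module.Finite.of_finite
  have hc0 : c₀ ≠ 0 := by rintro rfl; exact hc₀ IsSquare.zero
  have hnorm : IsSquare (Algebra.norm (ZMod p) (algebraMap (ZMod p) F c₀)) :=
    hsq.map (Algebra.norm (ZMod p) (S := F))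
  rw [Algebra.norm_algebraMap, aux_finrank p m hcard] at hnorm
  obtain ⟨k, hk⟩ := hm
  apply hc₀
  have hpow : IsSquare ((c₀ ^ k)⁻¹ ^ 2) := ⟨(c₀ ^ k)⁻¹, sq _⟩
  have := hnorm.mul hpow
  have hck : c₀ ^ k ≠ 0 := pow_ne_zero _ hc0
  have he : c₀ ^ m * (c₀ ^ k)⁻¹ ^ 2 = c₀ := by
    rw [hk]
    field_simp
    ring
  rwa [he] at this

end Aux2

/-- Let `q = p^m` with `p` an odd prime and `m` odd. The number of non-squares
`w ∈ GF(q)*` with `Tr_{q/p}(w) = 0` equals `(p^(m-1) - 1)/2`, and the number of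
non-squares with `Tr_{q/p}(w) ≠ 0` equals `p^(m-1)(p-1)/2`. -/
theorem stmt6 (p m : ℕ) [Fact p.Prime] (hp : Odd p) (hm : Odd m)
    {F : Type*} [Field F] [Fintype F] [Algebra (ZMod p) F]
    (hcard : Fintype.card F = p ^ m) :
    Nat.card {w : F // w ≠ 0 ∧ ¬ IsSquare w ∧ Algebra.trace (ZMod p) F w = 0} =
      (p ^ (m - 1) - 1) / 2 ∧
    Nat.card {w : F // w ≠ 0 ∧ ¬ IsSquare w ∧ Algebra.trace (ZMod p) F w ≠ 0} =
      p ^ (m - 1) * (p - 1) / 2 := by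
  classical
  have hp2 : p ≠ 2 := by rintro rfl; exact (by decide : ¬ Odd 2) hp
  have hm1 : 1 ≤ m := hm.pos
  have hchar : CharP F p := charP_of_injective_algebraMap (algebraMap (ZMod p) F).injective p
  have hring : ringChar F ≠ 2 := by rw [ringChar.eq F p]; exact hp2
  obtain ⟨c₀, hc₀⟩ := FiniteField.exists_nonsquare (F := ZMod p)
    (by rw [ringChar.eq (ZMod p) p]; exact hp2)
  have hc0 : c₀ ≠ 0 := fun h => hc₀ (h ▸ IsSquare.zero)
  set c : F := algebraMap (ZMod p) F c₀ with hcdef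
  have hcns : ¬ IsSquare c := aux_nonsquare p m hm hcard hc₀
  have hcne : c ≠ 0 := by
    simpa [hcdef] using (map_ne_zero (algebraMap (ZMod p) F)).mpr hc0
  have hχc : quadraticChar F c = -1 := quadraticChar_neg_one_iff_not_isSquare.mpr hcns
  have key : ∀ x : F, x ≠ 0 → (IsSquare (c * x) ↔ ¬ IsSquare x) := by
    intro x hx
    have hcx : c * x ≠ 0 := mul_ne_zero hcne hx
    rw [← quadraticChar_one_iff_isSquare hcx, map_mul, hχc,
      ← quadraticChar_neg_one_iff_not_isSquare]
    constructor
    · intro h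
      rcases quadraticChar_dichotomy hx with h1 | h1
      · rw [h1] at h; norm_num at h
      · exact h1
    · intro h; rw [h]; ring
  have hftr : ∀ x : F, Algebra.trace (ZMod p) F (c * x) = c₀ * Algebra.trace (ZMod p) F x := by
    intro x
    rw [hcdef, ← Algebra.smul_def, map_smul, smul_eq_mul]
  -- generic counting for trace conditions stable under multiplication by c₀
  have count : ∀ (t : ZMod p → Prop), (∀ a, t (c₀ * a) ↔ t a) →
      ∀ (sA sT : Finset F),
      (∀ w : F, w ∈ sA ↔ (w ≠ 0 ∧ ¬ IsSquare w ∧ t (Algebra.trace (ZMod p) F w))) →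
      (∀ w : F, w ∈ sT ↔ (w ≠ 0 ∧ t (Algebra.trace (ZMod p) F w))) →
      2 * sA.card = sT.card := by
    intro t ht sA sT hA hT
    have ht' : ∀ a, t (c₀⁻¹ * a) ↔ t a := by
      intro a
      conv_rhs => rw [show a = c₀ * (c₀⁻¹ * a) by field_simp]
      exact (ht _).symm
    have hsub : sA ⊆ sT := by
      intro w hw
      obtain ⟨h1, _, h3⟩ := (hA w).mp hw
      exact (hT w).mpr ⟨h1, h3⟩
    have hBmem : ∀ w : F, w ∈ sT \ sA ↔ (w ≠ 0 ∧ IsSquare w ∧ t (Algebra.trace (ZMod p) F w)) := by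
      intro w
      rw [Finset.mem_sdiff, hT w, hA w]
      tauto
    have hcardB : (sT \ sA).card = sA.card := by
      apply Finset.card_bij' (fun w _ => c * w) (fun w _ => c⁻¹ * w)
      · intro w hw
        obtain ⟨hw0, hwsq, hwt⟩ := (hBmem w).mp hw
        refine (hA _).mpr ⟨mul_ne_zero hcne hw0, ?_, by rw [hftr]; exact (ht _).mpr hwt⟩
        intro hsq
        exact ((key w hw0).mp hsq) hwsq
      · intro w hw
        obtain ⟨hw0, hwsq, hwt⟩ := (hA w).mp hw
        have hw0' : c⁻¹ * w ≠ 0 := mul_ne_zero (inv_ne_zero hcne) hw0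
        refine (hBmem _).mpr ⟨hw0', ?_, ?_⟩
        · by_contra hns
          have := (key _ hw0').mpr hns
          rw [mul_inv_cancel_left₀ hcne] at this
          exact hwsq this
        · have h2 : Algebra.trace (ZMod p) F (c * (c⁻¹ * w))
              = c₀ * Algebra.trace (ZMod p) F (c⁻¹ * w) := hftr _
          rw [mul_inv_cancel_left₀ hcne] at h2
          rw [show Algebra.trace (ZMod p) F (c⁻¹ * w)
              = c₀⁻¹ * Algebra.trace (ZMod p) F w by rw [h2, ← mul_assoc, inv_mul_cancel₀ hc0, one_mul]]
          exact (ht' _).mpr hwt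
      · intro w _; rw [inv_mul_cancel_left₀ hcne]
      · intro w _; rw [mul_inv_cancel_left₀ hcne]
    have := Finset.card_sdiff_add_card_eq_card hsub
    omega
  -- cardinality of the trace-zero locus
  have hker : Fintype.card {w : F // Algebra.trace (ZMod p) F w = 0} = p ^ (m - 1) := by
    have h1 := aux_ker_card p m hcard
    have hpm : p ^ m = p ^ (m - 1) * p := by
      rw [← pow_succ]; congr 1; omega
    have hppos : 0 < p := (Fact.out (p := p.Prime)).pos
    rw [hpm] at h1
    exact Nat.eq_of_mul_eq_mul_right hppos h1
  have hT0 : (Finset.univ.filter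
      (fun w : F => w ≠ 0 ∧ Algebra.trace (ZMod p) F w = 0)).card = p ^ (m - 1) - 1 := by
    have he : Finset.univ.filter (fun w : F => w ≠ 0 ∧ Algebra.trace (ZMod p) F w = 0)
        = (Finset.univ.filter (fun w : F => Algebra.trace (ZMod p) F w = 0)).erase 0 := by
      ext w
      simp only [mem_filter, mem_erase, mem_univ, true_and]
      try tauto
    rw [he, Finset.card_erase_of_mem (by simp), ← hker, Fintype.card_subtype]
  have hT1 : (Finset.univ.filter
      (fun w : F => w ≠ 0 ∧ Algebra.trace (ZMod p) F w ≠ 0)).card = p ^ m - p ^ (m - 1) := by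
    have he : Finset.univ.filter (fun w : F => w ≠ 0 ∧ Algebra.trace (ZMod p) F w ≠ 0)
        = Finset.univ.filter (fun w : F => ¬ (Algebra.trace (ZMod p) F w = 0)) := by
      ext w
      simp only [mem_filter, mem_univ, true_and]
      constructor
      · tauto
      · intro h
        exact ⟨fun h0 => h (by simp [h0]), h⟩
    rw [he]
    have h2 := Finset.card_filter_add_card_filter_not (s := Finset.univ)
      (p := fun w : F => Algebra.trace (ZMod p) F w = 0)
    rw [Finset.card_univ, hcard] at h2
    have h3 : (Finset.univ.filter (fun w : F => Algebra.trace (ZMod p) F w = 0)).card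
        = p ^ (m - 1) := by
      rw [← hker]; exact (Fintype.card_subtype _).symm
    omega
  have hcount0 := count (fun a => a = 0) (by intro a; simp [hc0])
    (Finset.univ.filter (fun w : F => w ≠ 0 ∧ ¬ IsSquare w ∧ Algebra.trace (ZMod p) F w = 0))
    (Finset.univ.filter (fun w : F => w ≠ 0 ∧ Algebra.trace (ZMod p) F w = 0))
    (by intro w; simp) (by intro w; simp)
  have hcount1 := count (fun a => a ≠ 0) (by intro a; simp [hc0])
    (Finset.univ.filter (fun w : F => w ≠ 0 ∧ ¬ IsSquare w ∧ Algebra.trace (ZMod p) F w ≠ 0))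
    (Finset.univ.filter (fun w : F => w ≠ 0 ∧ Algebra.trace (ZMod p) F w ≠ 0))
    (by intro w; simp) (by intro w; simp)
  rw [hT0] at hcount0
  rw [hT1] at hcount1
  rw [Nat.card_eq_fintype_card, Nat.card_eq_fintype_card,
    Fintype.card_subtype, Fintype.card_subtype]
  constructor
  · omega
  · have hpm : p ^ m = p ^ (m - 1) * p := by rw [← pow_succ]; congr 1; omega
    have hv := Nat.mul_pred (p ^ (m - 1)) p
    rw [Nat.pred_eq_sub_one] at hv
    omega
end

section
/- Let q = 2^{2e+1} with e ≥ 1, σ = 2^{e+1}, and let t(x,y) = ux + vy + w(x^σ + xy + y^{σ+2}) for fixed u, v, w ∈ GF(q) with w ≠ 0. Then the character sum Δ = Σ_{(x,y) ∈ GF(q)²} (-1)^{Tr(t(x,y))} satisfies Δ² = q². -/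
open Finset

namespace Stmt8Aux

variable {F : Type*} [Field F] [Fintype F] [Algebra (ZMod 2) F]

noncomputable def χ (F : Type*) [Field F] [Fintype F] [Algebra (ZMod 2) F] (z : F) : ℤ :=
  if Algebra.trace (ZMod 2) F z = 0 then 1 else -1

lemma chi_zero : χ F (0 : F) = 1 := by simp [χ]

lemma chi_add (a b : F) : χ F (a + b) = χ F a * χ F b := by
  have hcase : ∀ x : ZMod 2, x = 0 ∨ x = 1 := by decide
  unfold χ
  rw [map_add]
  rcases hcase (Algebra.trace (ZMod 2) F a) with ha | ha <;>
    rcases hcase (Algebra.trace (ZMod 2) F b) with hb | hb <;>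
    simp [ha, hb, (by decide : (1 : ZMod 2) + 1 = 0)]

lemma sum_chi : ∑ z : F, χ F z = 0 := by
  have hchar : CharP F 2 := charP_of_injective_algebraMap (algebraMap (ZMod 2) F).injective 2
  obtain ⟨z₀, hz₀⟩ := Algebra.trace_surjective (ZMod 2) F 1
  have h1 : ∑ z : F, χ F (z + z₀) = ∑ z : F, χ F z :=
    Fintype.sum_equiv (Equiv.addRight z₀) _ _ (fun z => rfl)
  have h2 : ∀ z : F, χ F (z + z₀) = - χ F z := by
    intro z
    rw [chi_add]
    have : χ F z₀ = -1 := by simp [χ, hz₀]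
    rw [this]; ring
  simp only [h2, Finset.sum_neg_distrib] at h1
  linarith

open scoped Classical in
lemma sum_chi_mul (c : F) :
    ∑ z : F, χ F (c * z) = if c = 0 then (Fintype.card F : ℤ) else 0 := by
  classical
  split_ifs with hc
  · simp [hc, chi_zero, Finset.card_univ]
  · have h1 : ∑ z : F, χ F (c * z) = ∑ z : F, χ F z :=
      Fintype.sum_equiv (Equiv.mulLeft₀ c hc) _ _ (fun z => rfl)
    rw [h1, sum_chi]

end Stmt8Aux

set_option maxHeartbeats 1000000 in
open Stmt8Aux in
/-- Let `q = 2^(2e+1)` with `e ≥ 1`, `σ = 2^(e+1)`, and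
`t(x,y) = ux + vy + w(x^σ + xy + y^(σ+2))` with `w ≠ 0`. Then
`Δ = Σ_{(x,y)} (-1)^{Tr(t(x,y))}` satisfies `Δ² = q²`. -/
theorem stmt8 (e : ℕ) (he : 1 ≤ e) {F : Type*} [Field F] [Fintype F] [Algebra (ZMod 2) F]
    (hcard : Fintype.card F = 2 ^ (2 * e + 1)) (u v w : F) (hw : w ≠ 0) :
    (∑ x : F, ∑ y : F,
        if Algebra.trace (ZMod 2) F
            (u * x + v * y + w * (x ^ (2 ^ (e + 1)) + x * y + y ^ (2 ^ (e + 1) + 2))) = 0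
        then (1 : ℤ) else -1) ^ 2 = ((2 : ℤ) ^ (2 * e + 1)) ^ 2 := by
  classical
  have hchar : CharP F 2 := charP_of_injective_algebraMap (algebraMap (ZMod 2) F).injective 2
  set σ : ℕ := 2 ^ (e + 1) with hσ
  have hσpos : σ ≠ 0 := by positivity
  set T : F → F → F := fun x y => u * x + v * y + w * (x ^ σ + x * y + y ^ (σ + 2)) with hT
  -- the key algebraic identity
  have hTadd : ∀ x y a b : F, T x y + T (x + a) (y + b) =
      (u * a + v * b + w * (a ^ σ + a * b + b ^ (σ + 2)))
        + (w * (a * y + b ^ 2 * y ^ σ + b ^ σ * y ^ 2) + (w * b) * x) := by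
    intro x y a b
    have h1 : (x + a) ^ σ = x ^ σ + a ^ σ := add_pow_char_pow x a 2 (e+1)
    have h2 : (y + b) ^ σ = y ^ σ + b ^ σ := add_pow_char_pow y b 2 (e+1)
    have h3 : (y + b) ^ (σ + 2) = (y ^ σ + b ^ σ) * (y ^ 2 + b ^ 2) := by
      rw [pow_add, h2, add_pow_char y b 2]
    simp only [hT, h1, h3]
    linear_combination (CharTwo.two_eq_zero (R := F)) *
      (u * x + v * y + w * (x ^ σ + x * y + y ^ σ * y ^ 2))
  -- key sum computation
  have key : ∀ a b : F, (∑ p : F × F, χ F (T p.1 p.2) * χ F (T (p.1 + a) (p.2 + b))) =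
      if a = 0 ∧ b = 0 then (Fintype.card F : ℤ) ^ 2 else 0 := by
    intro a b
    have hx : ∀ y : F, ∑ x : F, χ F (T x y) * χ F (T (x + a) (y + b)) =
        χ F ((u * a + v * b + w * (a ^ σ + a * b + b ^ (σ + 2)))
          + w * (a * y + b ^ 2 * y ^ σ + b ^ σ * y ^ 2))
          * (if w * b = 0 then (Fintype.card F : ℤ) else 0) := by
      intro y
      rw [← sum_chi_mul (w * b), Finset.mul_sum]
      refine Finset.sum_congr rfl fun x _ => ?_
      rw [← chi_add, ← chi_add]
      congr 1
      rw [hTadd]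
      ring
    rw [Fintype.sum_prod_type, Finset.sum_comm]
    simp only [hx]
    rcases eq_or_ne b 0 with hb | hb
    · subst hb
      simp only [mul_zero, zero_pow hσpos, zero_pow (show σ + 2 ≠ 0 by positivity),
        zero_pow (show (2:ℕ) ≠ 0 by norm_num), add_zero, zero_mul, eq_self_iff_true,
        if_true, and_true, ← mul_assoc]
      rw [← Finset.sum_mul]
      have : ∑ y : F, χ F (u * a + w * a ^ σ + w * a * y)
          = χ F (u * a + w * a ^ σ) * (if w * a = 0 then (Fintype.card F : ℤ) else 0) := by
        rw [← sum_chi_mul (w * a), Finset.mul_sum]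
        exact Finset.sum_congr rfl fun y _ => by rw [← chi_add]
      rw [this]
      rcases eq_or_ne a 0 with ha | ha
      · subst ha
        simp [chi_zero, zero_pow hσpos, sq]
      · have hwa : w * a ≠ 0 := mul_ne_zero hw ha
        simp [hwa, ha]
    · have hwb : w * b ≠ 0 := mul_ne_zero hw hb
      simp [hwb, hb]
  -- putting it together
  have hG : ∀ x y : F, (if Algebra.trace (ZMod 2) F
      (u * x + v * y + w * (x ^ (2 ^ (e + 1)) + x * y + y ^ (2 ^ (e + 1) + 2))) = 0
      then (1 : ℤ) else -1) = χ F (T x y) := fun x y => rfl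
  change (∑ x : F, ∑ y : F, χ F (T x y)) ^ 2 = _
  have hsum : (∑ x : F, ∑ y : F, χ F (T x y)) = ∑ p : F × F, χ F (T p.1 p.2) :=
    (Fintype.sum_prod_type (fun p : F × F => χ F (T p.1 p.2))).symm
  rw [hsum, sq, Finset.sum_mul_sum]
  have hre : ∀ p : F × F, ∑ q : F × F, χ F (T p.1 p.2) * χ F (T q.1 q.2)
      = ∑ r : F × F, χ F (T p.1 p.2) * χ F (T (p.1 + r.1) (p.2 + r.2)) := fun p =>
    (Fintype.sum_bijective (fun r : F × F => p + r) (Equiv.addLeft p).bijective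
      (fun r => χ F (T p.1 p.2) * χ F (T (p.1 + r.1) (p.2 + r.2)))
      (fun q => χ F (T p.1 p.2) * χ F (T q.1 q.2)) (fun r => rfl)).symm
  simp only [hre]
  rw [Finset.sum_comm]
  have hfin : ∀ r : F × F, ∑ p : F × F, χ F (T p.1 p.2) * χ F (T (p.1 + r.1) (p.2 + r.2))
      = if r = 0 then (Fintype.card F : ℤ) ^ 2 else 0 := by
    intro r
    rw [key r.1 r.2]
    exact if_congr (by simp [Prod.ext_iff]) rfl rfl
  simp only [hfin]
  rw [Finset.sum_ite_eq' Finset.univ (0 : F × F) (fun _ => (Fintype.card F : ℤ) ^ 2)]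
  rw [if_pos (Finset.mem_univ _), hcard]
  push_cast
  ring
end

section
/- Let q = 2^m with m > 1, let a, u, v, w ∈ GF(q) with w ≠ 0, and let g(x,y) = ux + vy + w(x² + xy + ay²). Then the number N₀ of pairs (x,y) ∈ GF(q)² with Tr_{q/2}(g(x,y)) = 0 satisfies N₀ = 2^{2m-1} + 2^{m-1} or N₀ = 2^{2m-1} - 2^{m-1}. -/
open Finset

private def chi : ZMod 2 → ℤ := fun a => if a = 0 then 1 else -1

private lemma chi_add (a b : ZMod 2) : chi (a + b) = chi a * chi b := by
  revert a b; decide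

private lemma chi_zero : chi 0 = 1 := rfl

private lemma sum_chi_zero {F : Type*} [Field F] [Fintype F] [Algebra (ZMod 2) F]
    {c : F} (hc : c ≠ 0) :
    ∑ x : F, chi (Algebra.trace (ZMod 2) F (c * x)) = 0 := by
  have : FiniteDimensional (ZMod 2) F := Module.Finite.of_finite
  obtain ⟨b, hb⟩ : ∃ b : F, Algebra.trace (ZMod 2) F (c * b) ≠ 0 := by
    have htr := (traceForm_nondegenerate (ZMod 2) F).1 c
    simp_rw [Algebra.traceForm_apply] at htr
    by_contra! hf
    exact hc (htr hf)
  have hb1 : Algebra.trace (ZMod 2) F (c * b) = 1 := by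
    have h2 : ∀ t : ZMod 2, t ≠ 0 → t = 1 := by decide
    exact h2 _ hb
  have key : ∑ x : F, chi (Algebra.trace (ZMod 2) F (c * (x + b)))
      = ∑ x : F, chi (Algebra.trace (ZMod 2) F (c * x)) :=
    Fintype.sum_equiv (Equiv.addRight b) _ _ (fun x => rfl)
  have key2 : ∀ x : F, chi (Algebra.trace (ZMod 2) F (c * (x + b)))
      = - chi (Algebra.trace (ZMod 2) F (c * x)) := by
    intro x
    have : c * (x + b) = c * x + c * b := by ring
    rw [this, map_add, hb1]
    have : ∀ t : ZMod 2, chi (t + 1) = - chi t := by decide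
    exact this _
  simp_rw [key2, Finset.sum_neg_distrib] at key
  linarith

/-- Let `q = 2^m`, `m > 1`, `w ≠ 0`, `g(x,y) = ux + vy + w(x² + xy + ay²)`. The number
`N₀` of `(x,y) ∈ GF(q)²` with `Tr_{q/2}(g(x,y)) = 0` is `2^(2m-1) ± 2^(m-1)`. -/
theorem stmt10 (m : ℕ) (hm : 1 < m) {F : Type*} [Field F] [Fintype F] [Algebra (ZMod 2) F]
    (hcard : Fintype.card F = 2 ^ m) (a u v w : F) (hw : w ≠ 0) :
    Nat.card {xy : F × F //
        Algebra.trace (ZMod 2) F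
          (u * xy.1 + v * xy.2 + w * (xy.1 ^ 2 + xy.1 * xy.2 + a * xy.2 ^ 2)) = 0} =
      2 ^ (2 * m - 1) + 2 ^ (m - 1) ∨
    Nat.card {xy : F × F //
        Algebra.trace (ZMod 2) F
          (u * xy.1 + v * xy.2 + w * (xy.1 ^ 2 + xy.1 * xy.2 + a * xy.2 ^ 2)) = 0} =
      2 ^ (2 * m - 1) - 2 ^ (m - 1) := by
  classical
  set f : F × F → ZMod 2 := fun z =>
    Algebra.trace (ZMod 2) F (u * z.1 + v * z.2 + w * (z.1 ^ 2 + z.1 * z.2 + a * z.2 ^ 2))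
    with hfdef
  -- characteristic 2
  have h2 : (2 : F) = 0 := by
    have h0 : ((2 : ZMod 2) : ZMod 2) = 0 := by decide
    calc (2 : F) = algebraMap (ZMod 2) F 2 := by rw [map_ofNat]
    _ = 0 := by rw [h0]; exact map_zero _
  -- the key cocycle identity
  have field_id : ∀ x y s t : F,
      u * (x + s) + v * (y + t) + w * ((x + s) ^ 2 + (x + s) * (y + t) + a * (y + t) ^ 2)
      = (u * x + v * y + w * (x ^ 2 + x * y + a * y ^ 2))
        + (u * s + v * t + w * (s ^ 2 + s * t + a * t ^ 2)) + w * (x * t + s * y) := by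
    intro x y s t
    linear_combination (w * x * s + w * a * y * t) * h2
  have fadd : ∀ z h : F × F,
      f (z + h) = f z + f h + Algebra.trace (ZMod 2) F (w * (z.1 * h.2 + h.1 * z.2)) := by
    intro z h
    simp only [hfdef, Prod.fst_add, Prod.snd_add]
    rw [field_id z.1 z.2 h.1 h.2, map_add, map_add]
  set q : ℤ := (2 : ℤ) ^ m with hq
  set S : ℤ := ∑ z : F × F, chi (f z) with hS
  -- inner sum lemma
  have inner : ∀ h : F × F,
      ∑ z : F × F, chi (Algebra.trace (ZMod 2) F (w * (z.1 * h.2 + h.1 * z.2)))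
        = (if h = 0 then q * q else 0) := by
    intro h
    have split : ∀ z : F × F,
        chi (Algebra.trace (ZMod 2) F (w * (z.1 * h.2 + h.1 * z.2)))
          = chi (Algebra.trace (ZMod 2) F ((w * h.2) * z.1))
            * chi (Algebra.trace (ZMod 2) F ((w * h.1) * z.2)) := by
      intro z
      rw [← chi_add, ← map_add]
      ring_nf
    rw [Fintype.sum_congr _ _ split]
    have hfac : ∑ z : F × F, chi (Algebra.trace (ZMod 2) F ((w * h.2) * z.1))
            * chi (Algebra.trace (ZMod 2) F ((w * h.1) * z.2))
        = (∑ x : F, chi (Algebra.trace (ZMod 2) F ((w * h.2) * x)))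
            * (∑ y : F, chi (Algebra.trace (ZMod 2) F ((w * h.1) * y))) := by
      rw [Finset.sum_mul_sum]
      exact Fintype.sum_prod_type (f := fun z : F × F =>
        chi (Algebra.trace (ZMod 2) F ((w * h.2) * z.1))
          * chi (Algebra.trace (ZMod 2) F ((w * h.1) * z.2)))
    rw [hfac]
    by_cases hz : h = 0
    · subst hz
      rw [if_pos rfl]
      simp only [Prod.fst_zero, Prod.snd_zero, mul_zero, zero_mul, map_zero, chi_zero]
      simp only [Finset.sum_const, Finset.card_univ, nsmul_eq_mul, mul_one, hcard, hq]
      push_cast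
      ring
    · rw [if_neg hz]
      have : h.1 ≠ 0 ∨ h.2 ≠ 0 := by
        by_contra hcon
        push_neg at hcon
        exact hz (Prod.ext hcon.1 hcon.2)
      rcases this with h1 | h1
      · have : ∑ y : F, chi (Algebra.trace (ZMod 2) F ((w * h.1) * y)) = 0 :=
          sum_chi_zero (mul_ne_zero hw h1)
        rw [this, mul_zero]
      · have : ∑ x : F, chi (Algebra.trace (ZMod 2) F ((w * h.2) * x)) = 0 :=
          sum_chi_zero (mul_ne_zero hw h1)
        rw [this, zero_mul]
  -- S^2 = q^2
  have hSS : S * S = q * q := by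
    rw [hS, Finset.sum_mul_sum]
    have step1 : ∀ z : F × F, ∑ y : F × F, chi (f z) * chi (f y)
        = ∑ h : F × F, chi (f h)
            * chi (Algebra.trace (ZMod 2) F (w * (z.1 * h.2 + h.1 * z.2))) := by
      intro z
      refine Fintype.sum_equiv (Equiv.addLeft z) _ _ ?_ |>.symm
      intro h
      show chi (f h) * _ = chi (f z) * chi (f (z + h))
      rw [fadd z h, ← chi_add, ← chi_add]
      congr 1
      have hzz : f z + f z = 0 := CharTwo.add_self_eq_zero _
      linear_combination -hzz
    simp_rw [step1]
    rw [Finset.sum_comm]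
    have step2 : ∀ h : F × F, ∑ z : F × F, chi (f h)
        * chi (Algebra.trace (ZMod 2) F (w * (z.1 * h.2 + h.1 * z.2)))
        = chi (f h) * (if h = 0 then q * q else 0) := by
      intro h
      rw [← Finset.mul_sum, inner h]
    simp_rw [step2]
    rw [Fintype.sum_eq_single (0 : F × F)]
    · have : f 0 = 0 := by simp [hfdef]
      rw [if_pos rfl, this, chi_zero, one_mul]
    · intro b hb
      rw [if_neg hb, mul_zero]
  -- counting
  set N : ℕ := Nat.card {xy : F × F // f xy = 0} with hN
  have hcount : 2 * (N : ℤ) = q * q + S := by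
    have hsplit : S = ∑ z ∈ Finset.univ.filter (fun z => f z = 0), (1 : ℤ)
        + ∑ z ∈ Finset.univ.filter (fun z => ¬ f z = 0), (-1 : ℤ) := by
      rw [hS]
      simp only [chi]
      rw [Finset.sum_ite]
    have hNcard : N = (Finset.univ.filter (fun z => f z = 0)).card := by
      rw [hN, Nat.card_eq_fintype_card, Fintype.card_subtype]
    have hcards : (Finset.univ.filter (fun z => f z = 0)).card
        + (Finset.univ.filter (fun z => ¬ f z = 0)).card = Fintype.card (F × F) :=
      Finset.card_filter_add_card_filter_not _
    have hq2 : (Fintype.card (F × F) : ℤ) = q * q := by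
      rw [Fintype.card_prod, hcard, hq]
      push_cast
      ring
    rw [Finset.sum_const, Finset.sum_const] at hsplit
    have : ((Finset.univ.filter (fun z => ¬ f z = 0)).card : ℤ)
        = q * q - ((Finset.univ.filter (fun z => f z = 0)).card : ℤ) := by
      rw [← hq2, ← hcards]
      push_cast
      ring
    rw [hsplit]
    simp only [nsmul_eq_mul, mul_one, mul_neg_one]
    rw [this, hNcard]
    ring
  -- conclude
  have hScases : S = q ∨ S = -q := mul_self_eq_mul_self_iff.mp hSS
  have hqpow : (2 : ℤ) ^ (2 * m) = q * q := by rw [hq, ← pow_add]; ring_nf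
  have e1 : (2 : ℤ) ^ (2 * m) = 2 * 2 ^ (2 * m - 1) := by
    rw [← pow_succ']
    congr 1
    omega
  have e2 : q = 2 * 2 ^ (m - 1) := by
    rw [hq, ← pow_succ']
    congr 1
    omega
  rcases hScases with hs | hs
  · left
    have : (N : ℤ) = 2 ^ (2 * m - 1) + 2 ^ (m - 1) := by
      rw [hs] at hcount
      rw [← hqpow] at hcount
      rw [e1, e2] at hcount
      linarith
    exact_mod_cast this
  · right
    have hle : (2:ℕ) ^ (m - 1) ≤ 2 ^ (2 * m - 1) := Nat.pow_le_pow_right (by norm_num) (by omega)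
    have : (N : ℤ) = 2 ^ (2 * m - 1) - 2 ^ (m - 1) := by
      rw [hs] at hcount
      rw [← hqpow] at hcount
      rw [e1, e2] at hcount
      linarith
    have hgoal : (N : ℤ) = ((2 ^ (2 * m - 1) - 2 ^ (m - 1) : ℕ) : ℤ) := by
      rw [Nat.cast_sub hle]
      push_cast
      exact this
    exact_mod_cast hgoal
end

section
/- Let q = 2^m with m > 1 and let C be the binary subfield code of the elliptic quadric code, i.e. C = { ((Tr_{q/2}(ux + vy + w(x² + xy + ay²)) + h)_{(x,y)∈GF(q)²}, Tr_{q/2}(w)) : u,v,w ∈ GF(q), h ∈ GF(2) }, where x² + x + a is irreducible over GF(q). Then C has length 2^{2m}+1, dimension 3m+1, and minimum distance 2^{2m-1} - 2^{m-1}. -/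
open Finset Polynomial

set_option linter.unusedSectionVars false

section Aux

variable {F : Type*} [Field F] [Fintype F] [DecidableEq F] [Algebra (ZMod 2) F]

private lemma zmod2_ne_iff : ∀ c d : ZMod 2, (c ≠ d) ↔ c = d + 1 := by decide

private lemma zmod2_sq : ∀ c : ZMod 2, c ^ 2 = c := by decide

omit [Fintype F] [DecidableEq F] in
private lemma charF : CharP F 2 :=
  charP_of_injective_algebraMap (algebraMap (ZMod 2) F).injective 2

private lemma twoF : (2 : F) = 0 := by
  have := charF (F := F)
  exact CharP.cast_eq_zero F 2

private lemma exists_trace_one {w : F} (hw : w ≠ 0) :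
    ∃ b, Algebra.trace (ZMod 2) F (w * b) = 1 := by
  have := (traceForm_nondegenerate (ZMod 2) F).1 w
  simp_rw [Algebra.traceForm_apply] at this
  by_contra! hf
  have hz : ∀ b, Algebra.trace (ZMod 2) F (w * b) = 0 := by
    intro b
    have := hf b
    revert this
    generalize Algebra.trace (ZMod 2) F (w * b) = c
    revert c; decide
  exact hw (this hz)

private lemma trace_sq (x : F) :
    Algebra.trace (ZMod 2) F (x ^ 2) = Algebra.trace (ZMod 2) F x := by
  haveI : CharP F 2 := charF
  haveI : Fact (Nat.Prime 2) := ⟨Nat.prime_two⟩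
  haveI : ExpChar F 2 := ExpChar.prime Nat.prime_two
  let σ : F ≃ₐ[ZMod 2] F := AlgEquiv.ofRingEquiv (f := frobeniusEquiv F 2)
    (fun c => by
      show frobenius F 2 ((algebraMap (ZMod 2) F) c) = (algebraMap (ZMod 2) F) c
      rw [frobenius_def, ← map_pow, zmod2_sq])
  apply (algebraMap (ZMod 2) F).injective
  rw [trace_eq_sum_automorphisms, trace_eq_sum_automorphisms]
  have hσ : σ x = x ^ 2 := frobeniusEquiv_apply F 2 x
  refine Fintype.sum_equiv (Equiv.mulRight σ) _ _ (fun τ => ?_)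
  simp only [Equiv.coe_mulRight, AlgEquiv.mul_apply, hσ]

private lemma trace_AS (t : F) : Algebra.trace (ZMod 2) F (t ^ 2 + t) = 0 := by
  rw [map_add, trace_sq]
  generalize Algebra.trace (ZMod 2) F t = c
  revert c; decide

private lemma half_card {α : Type*} [Fintype α] [DecidableEq α] (f : α → ZMod 2) (e : α ≃ α)
    (hf : ∀ x, f (e x) = f x + 1) (δ : ZMod 2) :
    2 * (univ.filter fun x => f x = δ).card = Fintype.card α := by
  have h1 : (univ.filter fun x => f x = δ).card = (univ.filter fun x => f x = δ + 1).card := by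
    apply Finset.card_equiv e
    intro i
    simp only [mem_filter, mem_univ, true_and, hf, add_left_inj]
  have h2 := Finset.card_filter_add_card_filter_not
    (s := (univ : Finset α)) (p := fun x => f x = δ)
  have h3 : (univ.filter fun x => ¬ f x = δ) = (univ.filter fun x => f x = δ + 1) := by
    apply Finset.filter_congr
    intro x _
    exact zmod2_ne_iff _ _
  rw [h3, ← h1, card_univ] at h2
  omega

private lemma count_trace {m : ℕ} (hm : 1 ≤ m) (hcard : Fintype.card F = 2 ^ m)
    {w : F} (hw : w ≠ 0) (δ : ZMod 2) :
    (univ.filter fun s : F => Algebra.trace (ZMod 2) F (w * s) = δ).card = 2 ^ (m - 1) := by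
  obtain ⟨b, hb⟩ := exists_trace_one hw
  have key := half_card (fun s => Algebra.trace (ZMod 2) F (w * s)) (Equiv.addRight b)
    (fun x => by
      simp only [Equiv.coe_addRight, mul_add, map_add, hb]) δ
  rw [hcard] at key
  have hp : 2 ^ m = 2 * 2 ^ (m - 1) := by
    rw [← pow_succ']
    congr 1
    omega
  omega

private lemma sq_add_eq_iff {t0 t : F} : t ^ 2 + t = t0 ^ 2 + t0 ↔ t = t0 ∨ t = t0 + 1 := by
  have h2 : (2 : F) = 0 := twoF
  constructor
  · intro h
    have hfac : (t + t0) * (t + t0 + 1) = 0 := by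
      linear_combination h + (t * t0 + t0 ^ 2 + t0) * h2
    rcases mul_eq_zero.mp hfac with h1 | h1
    · left; linear_combination h1 - t0 * h2
    · right; linear_combination h1 - (t0 + 1) * h2
  · rintro (rfl | rfl)
    · rfl
    · linear_combination (t0 + 1) * h2

private lemma AS_count (t0 : F) :
    (univ.filter fun t : F => t ^ 2 + t = t0 ^ 2 + t0).card = 2 := by
  have : (univ.filter fun t : F => t ^ 2 + t = t0 ^ 2 + t0) = {t0, t0 + 1} := by
    ext t
    simp [sq_add_eq_iff]
  rw [this]
  rw [Finset.card_insert_of_notMem (by simp), Finset.card_singleton]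

private lemma AS_solvable {m : ℕ} (hm : 1 ≤ m) (hcard : Fintype.card F = 2 ^ m)
    {c : F} (hc : Algebra.trace (ZMod 2) F c = 0) : ∃ t : F, t ^ 2 + t = c := by
  classical
  set S := (univ : Finset F).image (fun t => t ^ 2 + t) with hS
  have hcards : (univ : Finset F).card = ∑ b ∈ S, ((univ : Finset F).filter
      (fun t => t ^ 2 + t = b)).card := Finset.card_eq_sum_card_fiberwise
    (fun x _ => Finset.mem_image_of_mem _ (mem_univ x))
  have hfib : ∀ b ∈ S, ((univ : Finset F).filter (fun t => t ^ 2 + t = b)).card = 2 := by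
    intro b hb
    obtain ⟨t0, _, rfl⟩ := Finset.mem_image.mp hb
    exact AS_count t0
  rw [Finset.sum_congr rfl hfib, Finset.sum_const, smul_eq_mul, card_univ, hcard] at hcards
  -- S.card = 2^(m-1)
  have hScard : S.card = 2 ^ (m - 1) := by
    have hp : 2 ^ m = 2 * 2 ^ (m - 1) := by
      rw [← pow_succ']; congr 1; omega
    omega
  have hsub : S ⊆ (univ : Finset F).filter (fun s => Algebra.trace (ZMod 2) F s = 0) := by
    intro b hb
    obtain ⟨t0, _, rfl⟩ := Finset.mem_image.mp hb
    simp [trace_AS]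
  have hTcard : ((univ : Finset F).filter
      (fun s => Algebra.trace (ZMod 2) F s = 0)).card = 2 ^ (m - 1) := by
    have := count_trace hm hcard (w := 1) one_ne_zero 0
    simpa using this
  have heq : S = (univ : Finset F).filter (fun s => Algebra.trace (ZMod 2) F s = 0) :=
    Finset.eq_of_subset_of_card_le hsub (by rw [hScard, hTcard])
  have : c ∈ S := by
    rw [heq]
    simp [hc]
  obtain ⟨t, _, ht⟩ := Finset.mem_image.mp this
  exact ⟨t, ht⟩

private lemma no_root {a : F}
    (hirr : Irreducible (Polynomial.X ^ 2 + Polynomial.X + Polynomial.C a)) :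
    ∀ t : F, t ^ 2 + t + a ≠ 0 := by
  intro t h
  have hroot : IsRoot (X ^ 2 + X + C a) t := by
    simp [IsRoot, h]
  obtain ⟨g, hg⟩ := dvd_iff_isRoot.mpr hroot
  have hdeg : (X ^ 2 + X + C a : F[X]).natDegree = 2 := by
    compute_degree!
  rcases hirr.isUnit_or_isUnit hg with hu | hu
  · exact (Polynomial.not_isUnit_of_natDegree_pos _ (by simp)) hu
  · have hXt : (X - C t : F[X]) ≠ 0 := X_sub_C_ne_zero t
    have hgne : g ≠ 0 := by
      rintro rfl
      rw [mul_zero] at hg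
      rw [hg] at hdeg
      simp at hdeg
    have := Polynomial.natDegree_mul hXt hgne
    rw [← hg, hdeg, Polynomial.natDegree_X_sub_C,
      Polynomial.natDegree_eq_zero_of_isUnit hu] at this
    omega

private lemma trace_a_eq_one {m : ℕ} (hm : 1 ≤ m) (hcard : Fintype.card F = 2 ^ m) {a : F}
    (hirr : Irreducible (Polynomial.X ^ 2 + Polynomial.X + Polynomial.C a)) :
    Algebra.trace (ZMod 2) F a = 1 := by
  by_contra hne
  have h0 : Algebra.trace (ZMod 2) F a = 0 := by
    revert hne
    generalize Algebra.trace (ZMod 2) F a = c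
    revert c; decide
  obtain ⟨t, ht⟩ := AS_solvable hm hcard h0
  refine no_root hirr t ?_
  rw [ht]
  linear_combination a * (twoF (F := F))

private lemma Qzero {a : F}
    (hirr : Irreducible (Polynomial.X ^ 2 + Polynomial.X + Polynomial.C a))
    {x y : F} (h : x ^ 2 + x * y + a * y ^ 2 = 0) : x = 0 ∧ y = 0 := by
  by_cases hy : y = 0
  · subst hy
    simp only [mul_zero, ne_eq, OfNat.ofNat_ne_zero, not_false_eq_true, zero_pow,
      add_zero] at h
    exact ⟨pow_eq_zero_iff (two_ne_zero) |>.mp h, rfl⟩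
  · exfalso
    refine no_root hirr (x * y⁻¹) ?_
    have : (x * y⁻¹) ^ 2 + x * y⁻¹ + a = (x ^ 2 + x * y + a * y ^ 2) * (y⁻¹) ^ 2 := by
      field_simp
    rw [this, h, zero_mul]

private lemma count_prod {α β : Type*} [Fintype α] [Fintype β] [DecidableEq α] [DecidableEq β]
    (P : α × β → Prop) [DecidablePred P] :
    (univ.filter P).card = ∑ y : β, (univ.filter fun x => P (x, y)).card := by
  rw [Finset.card_eq_sum_card_fiberwise (f := Prod.snd) (t := univ) (fun x _ => mem_univ _)]
  refine Finset.sum_congr rfl fun y _ => ?_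
  refine Finset.card_nbij' Prod.fst (fun x => (x, y)) ?_ ?_ ?_ ?_
  · rintro ⟨x', y'⟩ hp
    simp only [Finset.mem_coe, mem_filter, mem_univ, true_and] at hp ⊢
    obtain ⟨h1, h2⟩ := hp
    subst h2
    exact h1
  · intro x hx
    simp only [Finset.mem_coe, mem_filter, mem_univ, true_and] at hx
    exact Finset.mem_filter.mpr ⟨Finset.mem_filter.mpr ⟨mem_univ _, hx⟩, rfl⟩
  · rintro ⟨x', y'⟩ hp
    simp only [Finset.mem_coe, mem_filter, mem_univ, true_and] at hp
    obtain ⟨_, h2⟩ := hp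
    subst h2
    rfl
  · intro x hx
    rfl

private lemma zmod2_one_one : (1 : ZMod 2) + 1 = 0 := by decide

private lemma zmod2_addone : ∀ d : ZMod 2, d + 1 = 0 → d = 1 := by decide

private lemma Qfiber {m : ℕ} (hm : 1 ≤ m) (hcard : Fintype.card F = 2 ^ m) {a : F}
    (hirr : Irreducible (Polynomial.X ^ 2 + Polynomial.X + Polynomial.C a))
    {s : F} (hs : s ≠ 0) :
    (univ.filter fun p : F × F => p.1 ^ 2 + p.1 * p.2 + a * p.2 ^ 2 = s).card = 2 ^ m + 1 := by
  haveI : Fact (Nat.Prime 2) := ⟨Nat.prime_two⟩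
  haveI : CharP F 2 := charF
  haveI : ExpChar F 2 := ExpChar.prime Nat.prime_two
  have h2 : (2 : F) = 0 := twoF
  have ha : Algebra.trace (ZMod 2) F a = 1 := trace_a_eq_one hm hcard hirr
  rw [count_prod]
  have g0 : (univ.filter fun x : F => x ^ 2 + x * (0:F) + a * (0:F) ^ 2 = s).card = 1 := by
    have heq : (univ.filter fun x : F => x ^ 2 + x * (0:F) + a * (0:F) ^ 2 = s)
        = {(frobeniusEquiv F 2).symm s} := by
      ext x
      simp only [mem_filter, mem_univ, true_and, mem_singleton, mul_zero, add_zero,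
        ne_eq, OfNat.ofNat_ne_zero, not_false_eq_true, zero_pow]
      constructor
      · intro h
        have hx : frobeniusEquiv F 2 x = s := by
          rw [coe_frobeniusEquiv, frobenius_def]; exact h
        rw [← hx, RingEquiv.symm_apply_apply]
      · rintro rfl
        exact frobeniusEquiv_symm_pow_p F 2 s
    rw [heq, Finset.card_singleton]
  have gy : ∀ y : F, y ≠ 0 →
      (univ.filter fun x : F => x ^ 2 + x * y + a * y ^ 2 = s).card
        = if Algebra.trace (ZMod 2) F (s * (y⁻¹) ^ 2) = 1 then 2 else 0 := by
    intro y hy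
    have hbij : (univ.filter fun x : F => x ^ 2 + x * y + a * y ^ 2 = s).card
        = (univ.filter fun t : F => t ^ 2 + t = s * (y⁻¹) ^ 2 + a).card := by
      refine Finset.card_nbij' (fun x => x * y⁻¹) (fun t => t * y) ?_ ?_ ?_ ?_
      · intro x hx
        simp only [Finset.mem_coe, mem_filter, mem_univ, true_and] at hx ⊢
        have key : (x * y⁻¹) ^ 2 + x * y⁻¹ + a = (x ^ 2 + x * y + a * y ^ 2) * (y⁻¹) ^ 2 := by
          field_simp
        rw [hx] at key
        linear_combination key - a * h2
      · intro t ht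
        simp only [Finset.mem_coe, mem_filter, mem_univ, true_and] at ht ⊢
        have expand : (t * y) ^ 2 + t * y * y + a * y ^ 2 = (t ^ 2 + t + a) * y ^ 2 := by ring
        rw [expand]
        have key : t ^ 2 + t + a = s * (y⁻¹) ^ 2 := by
          linear_combination ht + a * h2
        rw [key]
        field_simp
      · intro x hx
        field_simp
      · intro t ht
        field_simp
    rw [hbij]
    by_cases htr : Algebra.trace (ZMod 2) F (s * (y⁻¹) ^ 2) = 1
    · rw [if_pos htr]
      have hc0 : Algebra.trace (ZMod 2) F (s * (y⁻¹) ^ 2 + a) = 0 := by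
        rw [map_add, ha, htr]
        exact zmod2_one_one
      obtain ⟨t0, ht0⟩ := AS_solvable hm hcard hc0
      rw [← ht0]
      exact AS_count t0
    · rw [if_neg htr]
      rw [Finset.card_eq_zero, Finset.filter_eq_empty_iff]
      intro t _
      intro hteq
      apply htr
      apply zmod2_addone
      have hAS := trace_AS (F := F) t
      rw [hteq, map_add, ha] at hAS
      exact hAS
  rw [← Finset.add_sum_erase (univ : Finset F) _ (mem_univ (0:F))]
  rw [g0]
  have hsum : ∑ y ∈ (univ : Finset F).erase 0,
      (univ.filter fun x : F => x ^ 2 + x * y + a * y ^ 2 = s).card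
      = ∑ y ∈ (univ : Finset F).erase 0,
        (if Algebra.trace (ZMod 2) F (s * (y⁻¹) ^ 2) = 1 then 2 else 0) := by
    refine Finset.sum_congr rfl fun y hy => ?_
    exact gy y (Finset.ne_of_mem_erase hy)
  rw [hsum, Finset.sum_ite, Finset.sum_const, Finset.sum_const_zero, add_zero, smul_eq_mul]
  have hcount : (((univ : Finset F).erase 0).filter
      fun y => Algebra.trace (ZMod 2) F (s * (y⁻¹) ^ 2) = 1).card
      = (univ.filter fun u : F => Algebra.trace (ZMod 2) F (s * u) = 1).card := by
    refine Finset.card_nbij' (fun y => (y⁻¹) ^ 2) (fun u => ((frobeniusEquiv F 2).symm u)⁻¹)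
      ?_ ?_ ?_ ?_
    · intro y hy
      simp only [Finset.mem_coe, Finset.mem_filter, Finset.mem_erase, mem_univ, true_and, and_true] at hy ⊢
      exact hy.2
    · intro u hu
      simp only [Finset.mem_coe, Finset.mem_filter, mem_univ, true_and] at hu
      have hu0 : u ≠ 0 := by
        rintro rfl
        rw [mul_zero, map_zero] at hu
        exact one_ne_zero hu.symm
      have hsymm : ((frobeniusEquiv F 2).symm u) ≠ 0 := by
        intro h0
        apply hu0
        have := congrArg (frobeniusEquiv F 2) h0
        rw [RingEquiv.apply_symm_apply, map_zero] at this
        exact this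
      simp only [Finset.mem_coe, Finset.mem_filter, Finset.mem_erase, mem_univ, true_and, and_true]
      refine ⟨inv_ne_zero hsymm, ?_⟩
      rw [inv_inv, frobeniusEquiv_symm_pow_p]
      exact hu
    · intro y hy
      simp only [Finset.mem_coe, Finset.mem_filter, Finset.mem_erase, mem_univ, true_and, and_true] at hy
      have hy0 : y ≠ 0 := hy.1
      show ((frobeniusEquiv F 2).symm ((y⁻¹) ^ 2))⁻¹ = y
      have hfe : (frobeniusEquiv F 2).symm ((y⁻¹) ^ 2) = y⁻¹ := by
        have hyy : frobeniusEquiv F 2 y⁻¹ = (y⁻¹) ^ 2 := by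
          rw [coe_frobeniusEquiv, frobenius_def]
        rw [← hyy, RingEquiv.symm_apply_apply]
      rw [hfe, inv_inv]
    · intro u hu
      show ((((frobeniusEquiv F 2).symm u)⁻¹)⁻¹) ^ 2 = u
      rw [inv_inv, frobeniusEquiv_symm_pow_p]
  rw [hcount, count_trace hm hcard hs 1]
  have hp : 2 ^ m = 2 * 2 ^ (m - 1) := by
    rw [← pow_succ']; congr 1; omega
  omega

private lemma count_main {m : ℕ} (hm : 1 ≤ m) (hcard : Fintype.card F = 2 ^ m) {a : F}
    (hirr : Irreducible (Polynomial.X ^ 2 + Polynomial.X + Polynomial.C a))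
    {w : F} (hw : w ≠ 0) :
    (univ.filter fun p : F × F =>
        Algebra.trace (ZMod 2) F (w * (p.1 ^ 2 + p.1 * p.2 + a * p.2 ^ 2)) = 0).card
      = 2 ^ (2 * m - 1) - 2 ^ (m - 1) := by
  classical
  set T := (univ : Finset F).filter (fun s => Algebra.trace (ZMod 2) F (w * s) = 0) with hT
  have hmem : ∀ p : F × F, p ∈ (univ.filter fun p : F × F =>
      Algebra.trace (ZMod 2) F (w * (p.1 ^ 2 + p.1 * p.2 + a * p.2 ^ 2)) = 0) →
      (p.1 ^ 2 + p.1 * p.2 + a * p.2 ^ 2) ∈ T := by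
    intro p hp
    simp only [hT, mem_filter, mem_univ, true_and] at hp ⊢
    exact hp
  rw [Finset.card_eq_sum_card_fiberwise hmem]
  have hinner : ∀ s ∈ T, ((univ.filter fun p : F × F =>
      Algebra.trace (ZMod 2) F (w * (p.1 ^ 2 + p.1 * p.2 + a * p.2 ^ 2)) = 0).filter
        (fun p => p.1 ^ 2 + p.1 * p.2 + a * p.2 ^ 2 = s)).card
      = (univ.filter fun p : F × F => p.1 ^ 2 + p.1 * p.2 + a * p.2 ^ 2 = s).card := by
    intro s hsT
    simp only [hT, mem_filter, mem_univ, true_and] at hsT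
    congr 1
    rw [Finset.filter_filter]
    apply Finset.filter_congr
    intro p _
    constructor
    · rintro ⟨_, h⟩; exact h
    · intro h; exact ⟨by rw [h]; exact hsT, h⟩
  rw [Finset.sum_congr rfl hinner]
  have h0T : (0 : F) ∈ T := by
    simp [hT]
  rw [← Finset.add_sum_erase T _ h0T]
  have hfib0 : (univ.filter fun p : F × F => p.1 ^ 2 + p.1 * p.2 + a * p.2 ^ 2 = 0).card
      = 1 := by
    have heq : (univ.filter fun p : F × F => p.1 ^ 2 + p.1 * p.2 + a * p.2 ^ 2 = 0)
        = {((0 : F), (0 : F))} := by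
      ext p
      simp only [mem_filter, mem_univ, true_and, mem_singleton]
      constructor
      · intro h
        obtain ⟨h1, h2⟩ := Qzero hirr h
        exact Prod.ext h1 h2
      · rintro rfl
        simp
    rw [heq, Finset.card_singleton]
  rw [hfib0]
  have hrest : ∀ s ∈ T.erase 0,
      (univ.filter fun p : F × F => p.1 ^ 2 + p.1 * p.2 + a * p.2 ^ 2 = s).card
        = 2 ^ m + 1 := by
    intro s hsT
    exact Qfiber hm hcard hirr (Finset.ne_of_mem_erase hsT)
  rw [Finset.sum_congr rfl hrest, Finset.sum_const, smul_eq_mul]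
  have hTcard : T.card = 2 ^ (m - 1) := count_trace hm hcard hw 0
  rw [Finset.card_erase_of_mem h0T, hTcard]
  -- arithmetic
  obtain ⟨k, hk⟩ : ∃ k, 2 ^ (m - 1) = k + 1 :=
    ⟨2 ^ (m - 1) - 1, by have := Nat.one_le_two_pow (n := m - 1); omega⟩
  have e2 : 2 ^ m = 2 * (k + 1) := by
    rw [show m = (m - 1) + 1 by omega, pow_succ, hk]; ring
  have e3 : 2 ^ (2 * m - 1) = 2 * (k + 1) * (k + 1) := by
    rw [show 2 * m - 1 = (m - 1) + m by omega, pow_add, hk, e2]; ring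
  rw [hk, e2, e3]
  simp only [Nat.add_sub_cancel]
  symm
  apply Nat.sub_eq_of_eq_add
  ring

private lemma count_main1 {m : ℕ} (hm : 1 ≤ m) (hcard : Fintype.card F = 2 ^ m) {a : F}
    (hirr : Irreducible (Polynomial.X ^ 2 + Polynomial.X + Polynomial.C a))
    {w : F} (hw : w ≠ 0) :
    (univ.filter fun p : F × F =>
        Algebra.trace (ZMod 2) F (w * (p.1 ^ 2 + p.1 * p.2 + a * p.2 ^ 2)) = 1).card
      = 2 ^ (2 * m - 1) + 2 ^ (m - 1) := by
  classical
  have hsum := Finset.card_filter_add_card_filter_not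
    (s := (univ : Finset (F × F)))
    (p := fun p : F × F =>
      Algebra.trace (ZMod 2) F (w * (p.1 ^ 2 + p.1 * p.2 + a * p.2 ^ 2)) = 0)
  have hneg : ((univ : Finset (F × F)).filter fun p => ¬ Algebra.trace (ZMod 2) F
      (w * (p.1 ^ 2 + p.1 * p.2 + a * p.2 ^ 2)) = 0)
      = (univ.filter fun p : F × F =>
        Algebra.trace (ZMod 2) F (w * (p.1 ^ 2 + p.1 * p.2 + a * p.2 ^ 2)) = 1) := by
    apply Finset.filter_congr
    intro p _
    have h := zmod2_ne_iff (Algebra.trace (ZMod 2) F (w * (p.1 ^ 2 + p.1 * p.2 + a * p.2 ^ 2))) 0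
    rw [zero_add] at h
    exact h
  rw [hneg, count_main hm hcard hirr hw, card_univ, Fintype.card_prod, hcard] at hsum
  obtain ⟨k, hk⟩ : ∃ k, 2 ^ (m - 1) = k + 1 :=
    ⟨2 ^ (m - 1) - 1, by have := Nat.one_le_two_pow (n := m - 1); omega⟩
  have e2 : 2 ^ m = 2 * (k + 1) := by
    rw [show m = (m - 1) + 1 by omega, pow_succ, hk]; ring
  have e3 : 2 ^ (2 * m - 1) = 2 * (k + 1) * (k + 1) := by
    rw [show 2 * m - 1 = (m - 1) + m by omega, pow_add, hk, e2]; ring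
  have esub : 2 ^ (2 * m - 1) - 2 ^ (m - 1) = (k + 1) * (2 * k + 1) := by
    rw [e3, hk]
    apply Nat.sub_eq_of_eq_add
    ring
  rw [esub, e2] at hsum
  rw [e3, hk]
  have hfin : 2 * (k + 1) * (2 * (k + 1)) = (k + 1) * (2 * k + 1) + (2 * (k + 1) * (k + 1)
      + (k + 1)) := by ring
  omega

private lemma zmod2_ne_zero_iff : ∀ c d : ZMod 2, (c + d ≠ 0) ↔ c = d + 1 := by decide

private lemma zmod2_shift : ∀ c d h : ZMod 2, (c = d + h + 1) ↔ (c + d + h ≠ 0) := by decide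

private lemma shift_count {a : F} {w : F} (hw : w ≠ 0) (u v : F) (h : ZMod 2) :
    ∃ δ : ZMod 2,
      (univ.filter fun p : F × F =>
          Algebra.trace (ZMod 2) F
            (u * p.1 + v * p.2 + w * (p.1 ^ 2 + p.1 * p.2 + a * p.2 ^ 2)) + h ≠ 0).card
        = (univ.filter fun p : F × F =>
            Algebra.trace (ZMod 2) F (w * (p.1 ^ 2 + p.1 * p.2 + a * p.2 ^ 2)) = δ).card := by
  have h2 : (2 : F) = 0 := twoF
  obtain ⟨x0, hx0⟩ : ∃ x0 : F, w * x0 = v := ⟨w⁻¹ * v, by field_simp⟩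
  obtain ⟨y0, hy0⟩ : ∃ y0 : F, w * y0 = u := ⟨w⁻¹ * u, by field_simp⟩
  have key : ∀ x y : F,
      u * (x + x0) + v * (y + y0) + w * ((x + x0) ^ 2 + (x + x0) * (y + y0) + a * (y + y0) ^ 2)
        = w * (x ^ 2 + x * y + a * y ^ 2)
          + (u * x0 + v * y0 + w * (x0 ^ 2 + x0 * y0 + a * y0 ^ 2)) := by
    intro x y
    linear_combination x * hy0 + y * hx0 + (u * x + v * y + w * x * x0 + a * w * y * y0) * h2
  refine ⟨Algebra.trace (ZMod 2) F (u * x0 + v * y0 + w * (x0 ^ 2 + x0 * y0 + a * y0 ^ 2))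
    + h + 1, ?_⟩
  symm
  apply Finset.card_equiv (Equiv.addRight ((x0, y0) : F × F))
  intro p
  simp only [mem_filter, mem_univ, true_and, Equiv.coe_addRight, Prod.fst_add, Prod.snd_add]
  rw [key p.1 p.2, map_add (Algebra.trace (ZMod 2) F)
    (w * (p.1 ^ 2 + p.1 * p.2 + a * p.2 ^ 2))
    (u * x0 + v * y0 + w * (x0 ^ 2 + x0 * y0 + a * y0 ^ 2))]
  exact zmod2_shift _ _ _

private lemma hammingNorm_sum_elim {α β : Type*} [Fintype α] [Fintype β] [DecidableEq α]
    [DecidableEq β] (f : α → ZMod 2) (g : β → ZMod 2) :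
    hammingNorm (Sum.elim f g) = hammingNorm f + hammingNorm g := by
  classical
  show (univ.filter fun i : α ⊕ β => Sum.elim f g i ≠ 0).card
      = (univ.filter fun i : α => f i ≠ 0).card + (univ.filter fun i : β => g i ≠ 0).card
  rw [Finset.card_filter, Finset.card_filter, Finset.card_filter, Fintype.sum_sum_type]
  simp
  congr 1 <;> exact Finset.sum_congr rfl fun x _ => by split_ifs <;> simp_all

private lemma zmod2_cases : ∀ c : ZMod 2, c = 0 ∨ c = 1 := by decide

private lemma zmod2_ne0 : ∀ c : ZMod 2, c ≠ 0 ↔ c = 1 := by decide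

private lemma zmod2_p1 : ∀ c : ZMod 2, (c + 1 ≠ 0) ↔ c = 0 := by decide

end Aux


/-- The binary subfield code of the elliptic quadric code has parameters
`[2^(2m)+1, 3m+1, 2^(2m-1) - 2^(m-1)]`. -/
theorem stmt16 (m : ℕ) (hm : 1 < m) {F : Type*} [Field F] [Fintype F] [DecidableEq F]
    [Algebra (ZMod 2) F] (hcard : Fintype.card F = 2 ^ m) (a : F)
    (hirr : Irreducible (Polynomial.X ^ 2 + Polynomial.X + Polynomial.C a))
    (C : Set ((F × F) ⊕ Unit → ZMod 2))
    (hC : C = {c | ∃ (u v w : F) (h : ZMod 2), c = Sum.elim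
        (fun xy : F × F => Algebra.trace (ZMod 2) F
          (u * xy.1 + v * xy.2 + w * (xy.1 ^ 2 + xy.1 * xy.2 + a * xy.2 ^ 2)) + h)
        (fun _ : Unit => Algebra.trace (ZMod 2) F w)}) :
    Nat.card ((F × F) ⊕ Unit) = 2 ^ (2 * m) + 1 ∧
    (∃ S : Submodule (ZMod 2) ((F × F) ⊕ Unit → ZMod 2),
      (S : Set ((F × F) ⊕ Unit → ZMod 2)) = C ∧ Module.finrank (ZMod 2) S = 3 * m + 1) ∧
    (∀ c ∈ C, c ≠ 0 → 2 ^ (2 * m - 1) - 2 ^ (m - 1) ≤ hammingNorm c) ∧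
    (∃ c ∈ C, c ≠ 0 ∧ hammingNorm c = 2 ^ (2 * m - 1) - 2 ^ (m - 1)) := by
  have hm1 : 1 ≤ m := le_of_lt hm
  have hpow_lt : 2 ^ (m - 1) < 2 ^ (2 * m - 1) :=
    Nat.pow_lt_pow_right one_lt_two (by omega)
  have hcard2 : Fintype.card (F × F) = 2 ^ (2 * m) := by
    rw [Fintype.card_prod, hcard, ← pow_add]
    congr 1
    omega
  have hpow2 : 2 ^ (2 * m) = 2 * 2 ^ (2 * m - 1) := by
    rw [← pow_succ']
    congr 1
    omega
  -- the linear map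
  let Φa : (F × F × F × ZMod 2) →+ ((F × F) ⊕ Unit → ZMod 2) :=
    { toFun := fun t => Sum.elim
        (fun xy : F × F => Algebra.trace (ZMod 2) F
          (t.1 * xy.1 + t.2.1 * xy.2
            + t.2.2.1 * (xy.1 ^ 2 + xy.1 * xy.2 + a * xy.2 ^ 2)) + t.2.2.2)
        (fun _ : Unit => Algebra.trace (ZMod 2) F t.2.2.1)
      map_zero' := by
        funext i
        cases i with
        | inl p => simp
        | inr uu => simp
      map_add' := by
        intro t s
        funext i
        cases i with
        | inl p =>
          simp only [Sum.elim_inl, Prod.fst_add, Prod.snd_add, Pi.add_apply]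
          rw [show (t.1 + s.1) * p.1 + (t.2.1 + s.2.1) * p.2
              + (t.2.2.1 + s.2.2.1) * (p.1 ^ 2 + p.1 * p.2 + a * p.2 ^ 2)
              = (t.1 * p.1 + t.2.1 * p.2 + t.2.2.1 * (p.1 ^ 2 + p.1 * p.2 + a * p.2 ^ 2))
                + (s.1 * p.1 + s.2.1 * p.2
                  + s.2.2.1 * (p.1 ^ 2 + p.1 * p.2 + a * p.2 ^ 2)) from by ring, map_add]
          ring
        | inr uu =>
          simp only [Sum.elim_inr, Prod.fst_add, Prod.snd_add, Pi.add_apply]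
          rw [map_add] }
  let Φ : (F × F × F × ZMod 2) →ₗ[ZMod 2] ((F × F) ⊕ Unit → ZMod 2) :=
    Φa.toZModLinearMap 2
  have hΦ : ∀ t : F × F × F × ZMod 2, Φ t = Sum.elim
      (fun xy : F × F => Algebra.trace (ZMod 2) F
        (t.1 * xy.1 + t.2.1 * xy.2
          + t.2.2.1 * (xy.1 ^ 2 + xy.1 * xy.2 + a * xy.2 ^ 2)) + t.2.2.2)
      (fun _ : Unit => Algebra.trace (ZMod 2) F t.2.2.1) := fun _ => rfl
  -- injectivity
  have hinj : Function.Injective Φ := by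
    rw [injective_iff_map_eq_zero]
    rintro ⟨u, v, w, h⟩ ht
    have hfun : ∀ p : F × F, Algebra.trace (ZMod 2) F
        (u * p.1 + v * p.2 + w * (p.1 ^ 2 + p.1 * p.2 + a * p.2 ^ 2)) + h = 0 := by
      intro p
      have := congrFun ht (Sum.inl p)
      rw [hΦ] at this
      simpa using this
    have h0 : h = 0 := by
      have := hfun (0, 0)
      simpa using this
    subst h0
    by_cases hw : w = 0
    · subst hw
      have hu : u = 0 := by
        by_contra hu
        obtain ⟨b, hb⟩ := exists_trace_one hu
        have := hfun (b, 0)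
        simp only [mul_zero, add_zero, zero_mul, zero_add, mul_comm] at this
        rw [hb] at this
        exact one_ne_zero this
      have hv : v = 0 := by
        by_contra hv
        obtain ⟨b, hb⟩ := exists_trace_one hv
        have := hfun (0, b)
        simp only [mul_zero, add_zero, zero_mul, zero_add, mul_comm] at this
        rw [hb] at this
        exact one_ne_zero this
      rw [hu, hv]
      rfl
    · exfalso
      obtain ⟨δ, hδ⟩ := shift_count (a := a) hw u v 0
      have hempty : (Finset.univ.filter fun p : F × F =>
          Algebra.trace (ZMod 2) F
            (u * p.1 + v * p.2 + w * (p.1 ^ 2 + p.1 * p.2 + a * p.2 ^ 2)) + 0 ≠ 0) = ∅ := by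
        rw [Finset.filter_eq_empty_iff]
        intro p _
        exact not_not_intro (hfun p)
      rw [hempty] at hδ
      rcases zmod2_cases δ with rfl | rfl
      · rw [count_main hm1 hcard hirr hw] at hδ
        simp only [Finset.card_empty] at hδ
        exact (Nat.sub_pos_of_lt hpow_lt).ne' hδ.symm
      · rw [count_main1 hm1 hcard hirr hw] at hδ
        simp only [Finset.card_empty] at hδ
        have hN1pos : 0 < 2 ^ (2 * m - 1) + 2 ^ (m - 1) := by positivity
        exact hN1pos.ne' hδ.symm
  refine ⟨?_, ⟨LinearMap.range Φ, ?_, ?_⟩, ?_, ?_⟩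
  · -- length
    rw [Nat.card_eq_fintype_card, Fintype.card_sum, Fintype.card_prod, hcard]
    simp only [Fintype.card_unit]
    rw [← pow_add]
    congr 2
    omega
  · -- range = C
    ext c
    simp only [SetLike.mem_coe, LinearMap.mem_range, hC, Set.mem_setOf_eq]
    constructor
    · rintro ⟨⟨u, v, w, h⟩, rfl⟩
      exact ⟨u, v, w, h, (hΦ _)⟩
    · rintro ⟨u, v, w, h, rfl⟩
      exact ⟨(u, v, w, h), (hΦ _).symm⟩
  · -- finrank
    rw [LinearMap.finrank_range_of_inj hinj]
    have hfr : Module.finrank (ZMod 2) F = m := by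
      have hcd := Module.card_eq_pow_finrank (K := ZMod 2) (V := F)
      rw [ZMod.card, hcard] at hcd
      exact (Nat.pow_right_injective (le_refl 2) hcd.symm)
    rw [Module.finrank_prod, Module.finrank_prod, Module.finrank_prod, hfr,
      Module.finrank_self]
    omega
  · -- lower bound
    intro c hc hc0
    rw [hC] at hc
    obtain ⟨u, v, w, h, rfl⟩ := hc
    rw [hammingNorm_sum_elim]
    have hmain : hammingNorm (fun xy : F × F => Algebra.trace (ZMod 2) F
        (u * xy.1 + v * xy.2 + w * (xy.1 ^ 2 + xy.1 * xy.2 + a * xy.2 ^ 2)) + h)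
        = (Finset.univ.filter fun p : F × F => Algebra.trace (ZMod 2) F
          (u * p.1 + v * p.2 + w * (p.1 ^ 2 + p.1 * p.2 + a * p.2 ^ 2)) + h ≠ 0).card := rfl
    rw [hmain]
    refine le_trans ?_ (Nat.le_add_right _ _)
    by_cases hw : w = 0
    · subst hw
      by_cases huv : u = 0 ∧ v = 0
      · obtain ⟨rfl, rfl⟩ := huv
        have hh : h = 1 := by
          rcases zmod2_cases h with rfl | rfl
          · exfalso
            apply hc0
            funext i
            cases i with
            | inl p => simp
            | inr uu => simp
          · rfl
        subst hh
        have : (Finset.univ.filter fun p : F × F => Algebra.trace (ZMod 2) F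
            (0 * p.1 + 0 * p.2 + 0 * (p.1 ^ 2 + p.1 * p.2 + a * p.2 ^ 2)) + 1 ≠ 0)
            = Finset.univ := by
          rw [Finset.filter_eq_self]
          intro p _
          simp
        rw [this, Finset.card_univ, hcard2]
        exact le_trans (Nat.sub_le _ _) (Nat.pow_le_pow_right (by norm_num) (by omega))
      · -- u ≠ 0 or v ≠ 0
        have hone : ∃ q : F × F, Algebra.trace (ZMod 2) F (u * q.1 + v * q.2) = 1 := by
          rcases not_and_or.mp huv with hu | hv
          · obtain ⟨b, hb⟩ := exists_trace_one hu
            exact ⟨(b, 0), by simpa using hb⟩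
          · obtain ⟨b, hb⟩ := exists_trace_one hv
            exact ⟨(0, b), by simpa using hb⟩
        obtain ⟨q, hq⟩ := hone
        have hhalf := half_card (fun p : F × F => Algebra.trace (ZMod 2) F
            (u * p.1 + v * p.2 + 0 * (p.1 ^ 2 + p.1 * p.2 + a * p.2 ^ 2)) + h)
          (Equiv.addRight q) (fun p => by
            simp only [Equiv.coe_addRight, Prod.fst_add, Prod.snd_add]
            rw [show u * (p.1 + q.1) + v * (p.2 + q.2)
                + 0 * ((p.1 + q.1) ^ 2 + (p.1 + q.1) * (p.2 + q.2) + a * (p.2 + q.2) ^ 2)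
                = (u * p.1 + v * p.2 + 0 * (p.1 ^ 2 + p.1 * p.2 + a * p.2 ^ 2))
                  + (u * q.1 + v * q.2) from by ring, map_add, hq]
            ring) 1
        have hfc : (Finset.univ.filter fun p : F × F => Algebra.trace (ZMod 2) F
            (u * p.1 + v * p.2 + 0 * (p.1 ^ 2 + p.1 * p.2 + a * p.2 ^ 2)) + h ≠ 0)
            = (Finset.univ.filter fun p : F × F => Algebra.trace (ZMod 2) F
              (u * p.1 + v * p.2 + 0 * (p.1 ^ 2 + p.1 * p.2 + a * p.2 ^ 2)) + h = 1) := by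
          apply Finset.filter_congr
          intro p _
          exact zmod2_ne0 _
        rw [hfc]
        rw [hcard2, hpow2] at hhalf
        have heq := Nat.eq_of_mul_eq_mul_left (by norm_num : 0 < 2) hhalf
        rw [heq]
        exact Nat.sub_le _ _
    · obtain ⟨δ, hδ⟩ := shift_count (a := a) hw u v h
      rw [hδ]
      rcases zmod2_cases δ with rfl | rfl
      · rw [count_main hm1 hcard hirr hw]
      · rw [count_main1 hm1 hcard hirr hw]
        exact le_trans (Nat.sub_le _ _) (Nat.le_add_right _ _)
  · -- attainment
    have hker : ((Finset.univ : Finset F).filter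
        fun s : F => Algebra.trace (ZMod 2) F s = 0).card = 2 ^ (m - 1) := by
      have := count_trace hm1 hcard (w := (1:F)) one_ne_zero 0
      simpa using this
    have hbig : 1 < ((Finset.univ : Finset F).filter
        fun s : F => Algebra.trace (ZMod 2) F s = 0).card := by
      rw [hker]
      have : m - 1 ≠ 0 := by omega
      exact Nat.one_lt_two_pow this
    obtain ⟨w0, hw0mem, hw0ne⟩ := Finset.exists_mem_ne hbig 0
    simp only [Finset.mem_filter, Finset.mem_univ, true_and] at hw0mem
    refine ⟨Sum.elim
      (fun xy : F × F => Algebra.trace (ZMod 2) F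
        (0 * xy.1 + 0 * xy.2 + w0 * (xy.1 ^ 2 + xy.1 * xy.2 + a * xy.2 ^ 2)) + 1)
      (fun _ : Unit => Algebra.trace (ZMod 2) F w0), ?_, ?_, ?_⟩
    · rw [hC]
      exact ⟨0, 0, w0, 1, rfl⟩
    · -- nonzero: evaluate at (0,0)
      intro h0
      have := congrFun h0 (Sum.inl ((0 : F), (0 : F)))
      simp at this
    · rw [hammingNorm_sum_elim]
      have hright : hammingNorm (fun _ : Unit => Algebra.trace (ZMod 2) F w0) = 0 := by
        have : (fun _ : Unit => Algebra.trace (ZMod 2) F w0) = (0 : Unit → ZMod 2) := by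
          funext i
          rw [hw0mem]
          rfl
        rw [this]
        simp
      rw [hright, Nat.add_zero]
      have hmain : hammingNorm (fun xy : F × F => Algebra.trace (ZMod 2) F
          (0 * xy.1 + 0 * xy.2 + w0 * (xy.1 ^ 2 + xy.1 * xy.2 + a * xy.2 ^ 2)) + 1)
          = (Finset.univ.filter fun p : F × F => Algebra.trace (ZMod 2) F
            (0 * p.1 + 0 * p.2 + w0 * (p.1 ^ 2 + p.1 * p.2 + a * p.2 ^ 2)) + 1 ≠ 0).card := rfl
      rw [hmain]
      have hfc : (Finset.univ.filter fun p : F × F => Algebra.trace (ZMod 2) F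
          (0 * p.1 + 0 * p.2 + w0 * (p.1 ^ 2 + p.1 * p.2 + a * p.2 ^ 2)) + 1 ≠ 0)
          = (Finset.univ.filter fun p : F × F => Algebra.trace (ZMod 2) F
            (w0 * (p.1 ^ 2 + p.1 * p.2 + a * p.2 ^ 2)) = 0) := by
        apply Finset.filter_congr
        intro p _
        rw [show (0:F) * p.1 + 0 * p.2 + w0 * (p.1 ^ 2 + p.1 * p.2 + a * p.2 ^ 2)
          = w0 * (p.1 ^ 2 + p.1 * p.2 + a * p.2 ^ 2) from by ring]
        exact zmod2_p1 _
      rw [hfc]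
      exact count_main hm1 hcard hirr hw0ne
end

section
/- Let q = 2^m with m > 1 and a ∈ GF(q) such that x² + x + a is irreducible over GF(q). In the binary code C = { ((Tr_{q/2}(ux+vy+w(x²+xy+ay²)) + h)_{(x,y)∈GF(q)²}, Tr_{q/2}(w)) : u,v,w ∈ GF(q), h ∈ GF(2) }, the number of codewords of weight 2^{2m-1} equals 2(2^{2m}-1). -/
private def sgn17 : ZMod 2 → ℤ := fun t => if t = 0 then 1 else -1

private lemma sgn17_add : ∀ s t : ZMod 2, sgn17 (s + t) = sgn17 s * sgn17 t := by decide

private lemma sum_sgn17_eq_zero {V : Type*} [AddCommGroup V] [Fintype V]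
    (φ : V → ZMod 2) (hadd : ∀ x y, φ (x + y) = φ x + φ y)
    (hne : ∃ x, φ x ≠ 0) : ∑ z, sgn17 (φ z) = 0 := by
  obtain ⟨z₀, hz₀⟩ := hne
  have h1 : sgn17 (φ z₀) = -1 := by
    have : ∀ t : ZMod 2, t ≠ 0 → sgn17 t = -1 := by decide
    exact this _ hz₀
  have key : ∑ z, sgn17 (φ z) = ∑ z, sgn17 (φ (z₀ + z)) :=
    (Equiv.sum_comp (Equiv.addLeft z₀) (fun z => sgn17 (φ z))).symm
  have h2 : ∑ z, sgn17 (φ (z₀ + z)) = -∑ z, sgn17 (φ z) := by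
    rw [← Finset.sum_neg_distrib]
    refine Finset.sum_congr rfl fun z _ => ?_
    rw [hadd, sgn17_add, h1]; ring
  linarith [key, h2]

private lemma two_mul_card_filter {V : Type*} [Fintype V] (g : V → ZMod 2)
    [DecidablePred fun z => g z ≠ 0] :
    2 * ((Finset.univ.filter fun z => g z ≠ 0).card : ℤ) =
      (Fintype.card V : ℤ) - ∑ z, sgn17 (g z) := by
  have h : ∀ z, sgn17 (g z) = 1 - 2 * (if g z ≠ 0 then (1:ℤ) else 0) := by
    intro z
    by_cases h : g z = 0 <;> simp [sgn17, h]
  rw [Finset.sum_congr rfl fun z _ => h z]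
  rw [Finset.sum_sub_distrib, ← Finset.mul_sum]
  rw [Finset.card_filter]
  push_cast
  rw [Finset.sum_const, Finset.card_univ]
  simp only [nsmul_eq_mul, mul_one]
  ring_nf

section
variable {F : Type*} [Field F] [Fintype F] [DecidableEq F] [Algebra (ZMod 2) F]

local notation "tr" => Algebra.trace (ZMod 2) F

private lemma trace_nondeg17 {u : F} (hu : u ≠ 0) : ∃ x, tr (u * x) ≠ 0 := by
  have : Module.Finite (ZMod 2) F := Module.Finite.of_finite
  have hnd := (traceForm_nondegenerate (ZMod 2) F).1 u
  simp_rw [Algebra.traceForm_apply] at hnd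
  by_contra! hf
  exact hu (hnd hf)

private lemma two_eq_zero17 : (2:F) = 0 := by
  have h := map_ofNat (algebraMap (ZMod 2) F) 2
  rw [show ((OfNat.ofNat 2 : ZMod 2)) = 0 from rfl, map_zero] at h
  exact h.symm

private lemma Ssq17 (a u v w : F) (hw : w ≠ 0) (h : ZMod 2) :
    (∑ z : F × F, sgn17 (tr (u*z.1+v*z.2+w*(z.1^2+z.1*z.2+a*z.2^2)) + h)) *
    (∑ z : F × F, sgn17 (tr (u*z.1+v*z.2+w*(z.1^2+z.1*z.2+a*z.2^2)) + h)) =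
      (Fintype.card (F × F) : ℤ) := by
  set g : F × F → ZMod 2 := fun z => tr (u*z.1+v*z.2+w*(z.1^2+z.1*z.2+a*z.2^2)) + h with hg
  have hh : ∀ t : ZMod 2, t + t = 0 := by decide
  have key : ∀ z d : F × F, g z + g (z + d) =
      tr (u*d.1+v*d.2+w*(d.1^2+d.1*d.2+a*d.2^2)) + tr (w*(z.1*d.2+z.2*d.1)) := by
    intro z d
    have hF : (u*(z+d).1+v*(z+d).2+w*((z+d).1^2+(z+d).1*(z+d).2+a*(z+d).2^2)) =
        (u*z.1+v*z.2+w*(z.1^2+z.1*z.2+a*z.2^2)) +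
        ((u*d.1+v*d.2+w*(d.1^2+d.1*d.2+a*d.2^2)) + w*(z.1*d.2+z.2*d.1)) := by
      simp only [Prod.fst_add, Prod.snd_add]
      linear_combination (w*(z.1*d.1 + a*z.2*d.2)) * (two_eq_zero17 (F := F))
    calc g z + g (z + d)
        = (tr (u*z.1+v*z.2+w*(z.1^2+z.1*z.2+a*z.2^2)) +
           tr (u*(z+d).1+v*(z+d).2+w*((z+d).1^2+(z+d).1*(z+d).2+a*(z+d).2^2))) + (h + h) := by
          simp only [hg]; ring
      _ = tr (u*z.1+v*z.2+w*(z.1^2+z.1*z.2+a*z.2^2)) +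
           tr (u*(z+d).1+v*(z+d).2+w*((z+d).1^2+(z+d).1*(z+d).2+a*(z+d).2^2)) := by
          rw [hh, add_zero]
      _ = tr (u*z.1+v*z.2+w*(z.1^2+z.1*z.2+a*z.2^2)) +
           (tr (u*z.1+v*z.2+w*(z.1^2+z.1*z.2+a*z.2^2)) +
            tr ((u*d.1+v*d.2+w*(d.1^2+d.1*d.2+a*d.2^2)) + w*(z.1*d.2+z.2*d.1))) := by
          rw [hF, map_add (Algebra.trace (ZMod 2) F) (u*z.1+v*z.2+w*(z.1^2+z.1*z.2+a*z.2^2))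
            ((u*d.1+v*d.2+w*(d.1^2+d.1*d.2+a*d.2^2)) + w*(z.1*d.2+z.2*d.1))]
      _ = tr (u*d.1+v*d.2+w*(d.1^2+d.1*d.2+a*d.2^2)) + tr (w*(z.1*d.2+z.2*d.1)) := by
          rw [← add_assoc, hh, zero_add,
            map_add (Algebra.trace (ZMod 2) F) (u*d.1+v*d.2+w*(d.1^2+d.1*d.2+a*d.2^2))
              (w*(z.1*d.2+z.2*d.1))]
  have step1 : (∑ z : F × F, sgn17 (g z)) * (∑ z : F × F, sgn17 (g z)) =
      ∑ z : F × F, ∑ d : F × F, sgn17 (g z + g (z + d)) := by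
    rw [Finset.sum_mul_sum]
    refine Finset.sum_congr rfl fun z _ => ?_
    rw [← Equiv.sum_comp (Equiv.addLeft z) (fun z' => sgn17 (g z) * sgn17 (g z'))]
    refine Finset.sum_congr rfl fun d _ => ?_
    rw [← sgn17_add]
    congr 1
  have inner : ∀ d : F × F, (∑ z : F × F, sgn17 (tr (w*(z.1*d.2+z.2*d.1)))) =
      if d = 0 then (Fintype.card (F × F) : ℤ) else 0 := by
    intro d
    by_cases hd : d = 0
    · simp [hd, sgn17, Finset.card_univ]
    · rw [if_neg hd]
      apply sum_sgn17_eq_zero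
      · intro x y
        rw [← map_add]
        congr 1
        simp only [Prod.fst_add, Prod.snd_add]
        ring
      · have : d.1 ≠ 0 ∨ d.2 ≠ 0 := by
          by_contra hc
          push_neg at hc
          exact hd (Prod.ext hc.1 hc.2)
        rcases this with h1 | h2
        · obtain ⟨x, hx⟩ := trace_nondeg17 (mul_ne_zero hw h1)
          refine ⟨(0, x), ?_⟩
          show tr (w*((0:F)*d.2+x*d.1)) ≠ 0
          rw [show w*((0:F)*d.2+x*d.1) = w*d.1*x by ring]
          exact hx
        · obtain ⟨x, hx⟩ := trace_nondeg17 (mul_ne_zero hw h2)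
          refine ⟨(x, 0), ?_⟩
          show tr (w*(x*d.2+(0:F)*d.1)) ≠ 0
          rw [show w*(x*d.2+(0:F)*d.1) = w*d.2*x by ring]
          exact hx
  calc (∑ z : F × F, sgn17 (g z)) * (∑ z : F × F, sgn17 (g z))
      = ∑ z : F × F, ∑ d : F × F, sgn17 (g z + g (z + d)) := step1
    _ = ∑ d : F × F, ∑ z : F × F, sgn17 (g z + g (z + d)) := Finset.sum_comm
    _ = ∑ d : F × F, sgn17 (tr (u*d.1+v*d.2+w*(d.1^2+d.1*d.2+a*d.2^2))) *
          ∑ z : F × F, sgn17 (tr (w*(z.1*d.2+z.2*d.1))) := by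
        refine Finset.sum_congr rfl fun d _ => ?_
        rw [Finset.mul_sum]
        refine Finset.sum_congr rfl fun z _ => ?_
        rw [key z d, sgn17_add]
    _ = (Fintype.card (F × F) : ℤ) := by
        simp only [inner, mul_ite, mul_zero]
        rw [Finset.sum_ite_eq' Finset.univ (0 : F × F)]
        simp [sgn17]
end

section
variable {F : Type*} [Field F] [Fintype F] [DecidableEq F] [Algebra (ZMod 2) F]

local notation "tr" => Algebra.trace (ZMod 2) F

set_option linter.unusedSectionVars false

private lemma hn17 (f : F × F → ZMod 2) (t : ZMod 2) :
    hammingNorm (Sum.elim f fun _ : Unit => t) =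
      (Finset.univ.filter fun z => f z ≠ 0).card + if t ≠ 0 then 1 else 0 := by
  simp [hammingNorm, Finset.card_filter, Fintype.sum_sum_type]
  rfl

private lemma trace_inj17 {u u' : F} (hne : u ≠ u')
    (h : ∀ x, tr (u*x) = tr (u'*x)) : False := by
  have : Module.Finite (ZMod 2) F := Module.Finite.of_finite
  have hnd := (traceForm_nondegenerate (ZMod 2) F).1 (u - u')
  simp_rw [Algebra.traceForm_apply] at hnd
  apply sub_ne_zero_of_ne hne
  apply hnd
  intro x
  rw [sub_mul, map_sub, h, sub_self]

private lemma wt_w0 (m : ℕ) (hm : 1 ≤ m) (hcard : Fintype.card F = 2^m) (a u v : F)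
    (huv : ¬(u = 0 ∧ v = 0)) (h : ZMod 2) :
    hammingNorm (Sum.elim
      (fun xy : F × F => tr (u * xy.1 + v * xy.2 + 0 * (xy.1 ^ 2 + xy.1 * xy.2 + a * xy.2 ^ 2)) + h)
      (fun _ : Unit => tr (0:F))) = 2 ^ (2*m - 1) := by
  rw [hn17]
  rw [if_neg (by simp)]
  set g : F × F → ZMod 2 := fun xy =>
    tr (u * xy.1 + v * xy.2 + 0 * (xy.1 ^ 2 + xy.1 * xy.2 + a * xy.2 ^ 2)) + h with hg
  have hsum : ∑ z : F × F, sgn17 (g z) = 0 := by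
    have hterm : ∀ z : F × F, sgn17 (g z) = sgn17 (tr (u * z.1 + v * z.2)) * sgn17 h := by
      intro z
      rw [← sgn17_add]
      congr 1
      simp [hg]
    rw [Finset.sum_congr rfl fun z _ => hterm z, ← Finset.sum_mul]
    rw [sum_sgn17_eq_zero (fun z : F × F => tr (u * z.1 + v * z.2)), zero_mul]
    · intro x y
      rw [← map_add]
      congr 1
      simp only [Prod.fst_add, Prod.snd_add]
      ring
    · push_neg at huv
      by_cases hu : u = 0
      · obtain ⟨x, hx⟩ := trace_nondeg17 (huv hu)
        refine ⟨(0, x), ?_⟩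
        show tr (u * 0 + v * x) ≠ 0
        rwa [show u * 0 + v * x = v * x by ring]
      · obtain ⟨x, hx⟩ := trace_nondeg17 hu
        refine ⟨(x, 0), ?_⟩
        show tr (u * x + v * 0) ≠ 0
        rwa [show u * x + v * 0 = u * x by ring]
  have h2N := two_mul_card_filter g
  rw [hsum, sub_zero] at h2N
  have hcard2 : (Fintype.card (F × F) : ℤ) = 2 * 2 ^ (2*m - 1) := by
    rw [Fintype.card_prod, hcard]
    push_cast
    rw [← pow_add, ← pow_succ']
    congr 1
    omega
  rw [hcard2] at h2N
  have hNat : ((Finset.univ.filter fun z => g z ≠ 0).card : ℤ) = 2 ^ (2*m-1) := by linarith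
  rw [add_zero]
  exact_mod_cast hNat

private lemma wt_wne (m : ℕ) (hm : 1 < m) (hcard : Fintype.card F = 2^m) (a u v w : F)
    (hw : w ≠ 0) (h : ZMod 2) :
    hammingNorm (Sum.elim
      (fun xy : F × F => tr (u * xy.1 + v * xy.2 + w * (xy.1 ^ 2 + xy.1 * xy.2 + a * xy.2 ^ 2)) + h)
      (fun _ : Unit => tr w)) ≠ 2 ^ (2*m - 1) := by
  intro hcon
  rw [hn17] at hcon
  set g : F × F → ZMod 2 := fun xy =>
    tr (u * xy.1 + v * xy.2 + w * (xy.1 ^ 2 + xy.1 * xy.2 + a * xy.2 ^ 2)) + h with hg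
  set N : ℕ := (Finset.univ.filter fun z => g z ≠ 0).card with hN
  set t : ℕ := if tr w ≠ 0 then 1 else 0 with ht
  have htle : t ≤ 1 := by rw [ht]; split <;> omega
  have h2N := two_mul_card_filter g
  have hSS := Ssq17 a u v w hw h
  set S : ℤ := ∑ z : F × F, sgn17 (g z) with hS
  have hcard2 : (Fintype.card (F × F) : ℤ) = 2 ^ (2*m) := by
    rw [Fintype.card_prod, hcard]
    push_cast
    rw [← pow_add, two_mul]
  rw [hcard2] at h2N hSS
  have hcast : (N : ℤ) + (t : ℤ) = 2 ^ (2*m-1) := by exact_mod_cast hcon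
  have hpow : (2:ℤ) ^ (2*m) = 2 * 2 ^ (2*m-1) := by
    rw [← pow_succ']
    congr 1
    omega
  have h16 : (16:ℤ) ≤ 2 ^ (2*m) := by
    calc (16:ℤ) = 2^4 := by norm_num
    _ ≤ 2 ^ (2*m) := pow_le_pow_right₀ (by norm_num) (by omega)
  have htZ : (t:ℤ) ≤ 1 := by exact_mod_cast htle
  have htZ0 : (0:ℤ) ≤ t := Int.natCast_nonneg t
  -- S = 2t
  have hSt : S = 2 * t := by linarith
  nlinarith [hSS, hSt, htZ, htZ0, h16]

private lemma wt_000 (m : ℕ) (hm : 1 ≤ m) (hcard : Fintype.card F = 2^m) (a : F) (h : ZMod 2) :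
    hammingNorm (Sum.elim
      (fun xy : F × F => tr ((0:F) * xy.1 + 0 * xy.2 + 0 * (xy.1 ^ 2 + xy.1 * xy.2 + a * xy.2 ^ 2)) + h)
      (fun _ : Unit => tr (0:F))) ≠ 2 ^ (2*m - 1) := by
  rw [hn17, if_neg (by simp)]
  have hgz : ∀ z : F × F,
      (tr ((0:F) * z.1 + 0 * z.2 + 0 * (z.1 ^ 2 + z.1 * z.2 + a * z.2 ^ 2)) + h) = h := by
    intro z; simp
  have hKpos : 0 < 2 ^ (2*m - 1) := Nat.pow_pos (by norm_num)
  simp only [hgz]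
  by_cases hh : h = 0
  · rw [hh]
    simp only [ne_eq, not_true_eq_false, Finset.filter_false, Finset.card_empty, zero_add]
    exact hKpos.ne
  · rw [Finset.filter_true_of_mem fun z _ => hh, Finset.card_univ, add_zero]
    rw [Fintype.card_prod, hcard, ← pow_add]
    intro hcon
    have := Nat.pow_right_injective (le_refl 2) hcon
    omega

end

/-- In the binary subfield code of the elliptic quadric code, the number of codewords of
Hamming weight `2^(2m-1)` equals `2(2^(2m) - 1)`. -/
theorem stmt17 (m : ℕ) (hm : 1 < m) {F : Type*} [Field F] [Fintype F] [DecidableEq F]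
    [Algebra (ZMod 2) F] (hcard : Fintype.card F = 2 ^ m) (a : F)
    (hirr : Irreducible (Polynomial.X ^ 2 + Polynomial.X + Polynomial.C a))
    (C : Set ((F × F) ⊕ Unit → ZMod 2))
    (hC : C = {c | ∃ (u v w : F) (h : ZMod 2), c = Sum.elim
        (fun xy : F × F => Algebra.trace (ZMod 2) F
          (u * xy.1 + v * xy.2 + w * (xy.1 ^ 2 + xy.1 * xy.2 + a * xy.2 ^ 2)) + h)
        (fun _ : Unit => Algebra.trace (ZMod 2) F w)}) :
    Nat.card {c : (F × F) ⊕ Unit → ZMod 2 // c ∈ C ∧ hammingNorm c = 2 ^ (2 * m - 1)} =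
      2 * (2 ^ (2 * m) - 1) := by
  classical
  let cw : F → F → F → ZMod 2 → ((F × F) ⊕ Unit → ZMod 2) := fun u v w h => Sum.elim
      (fun xy : F × F => Algebra.trace (ZMod 2) F
        (u * xy.1 + v * xy.2 + w * (xy.1 ^ 2 + xy.1 * xy.2 + a * xy.2 ^ 2)) + h)
      (fun _ : Unit => Algebra.trace (ZMod 2) F w)
  have hmem : ∀ (u v : F) (h : ZMod 2), cw u v 0 h ∈ C := by
    intro u v h
    rw [hC]
    exact ⟨u, v, 0, h, rfl⟩
  have hwt1 : ∀ (u v : F) (h : ZMod 2), ¬(u = 0 ∧ v = 0) →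
      hammingNorm (cw u v 0 h) = 2 ^ (2 * m - 1) := by
    intro u v h huv
    exact wt_w0 m hm.le hcard a u v huv h
  let ι : ({p : F × F // p ≠ 0} × ZMod 2) →
      {c : (F × F) ⊕ Unit → ZMod 2 // c ∈ C ∧ hammingNorm c = 2 ^ (2 * m - 1)} :=
    fun x => ⟨cw x.1.1.1 x.1.1.2 0 x.2, hmem _ _ _,
      hwt1 _ _ _ (fun h0 => x.1.2 (Prod.ext h0.1 h0.2))⟩
  have hinj : Function.Injective ι := by
    rintro ⟨⟨⟨u, v⟩, hp⟩, h⟩ ⟨⟨⟨u', v'⟩, hp'⟩, h'⟩ hxy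
    have heq : cw u v 0 h = cw u' v' 0 h' := congrArg Subtype.val hxy
    have hh : h = h' := by
      have := congrFun heq (Sum.inl (0, 0))
      simpa [cw] using this
    have hu : u = u' := by
      by_contra hne
      refine trace_inj17 hne fun x => ?_
      have := congrFun heq (Sum.inl (x, 0))
      simp only [cw, Sum.elim_inl, mul_zero, zero_mul, add_zero, hh] at this
      exact add_right_cancel this
    have hv : v = v' := by
      by_contra hne
      refine trace_inj17 hne fun y => ?_
      have := congrFun heq (Sum.inl (0, y))
      simp only [cw, Sum.elim_inl, mul_zero, zero_mul, add_zero, zero_add, hh] at this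
      exact add_right_cancel this
    simp [hu, hv, hh]
  have hsurj : Function.Surjective ι := by
    rintro ⟨c, hcC, hwt⟩
    rw [hC] at hcC
    obtain ⟨u, v, w, h, rfl⟩ := hcC
    by_cases hw : w = 0
    · subst hw
      by_cases huv : u = 0 ∧ v = 0
      · exfalso
        obtain ⟨rfl, rfl⟩ := huv
        exact wt_000 m hm.le hcard a h hwt
      · exact ⟨⟨⟨(u, v), fun h0 => huv ⟨congrArg Prod.fst h0, congrArg Prod.snd h0⟩⟩, h⟩,
          Subtype.ext rfl⟩
    · exact absurd hwt (wt_wne m hm hcard a u v w hw h)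
  rw [← Nat.card_congr (Equiv.ofBijective ι ⟨hinj, hsurj⟩)]
  rw [Nat.card_eq_fintype_card, Fintype.card_prod]
  have h1 : Fintype.card {p : F × F // p ≠ 0} = 2 ^ (2 * m) - 1 := by
    have h2 := Fintype.card_subtype_compl (fun p : F × F => p = 0)
    rw [Fintype.card_subtype_eq (0 : F × F)] at h2
    rw [Fintype.card_prod, hcard, ← pow_add, ← two_mul] at h2
    convert h2 using 2
  rw [h1]
  have h3 : Fintype.card (ZMod 2) = 2 := rfl
  rw [h3, mul_comm]
end

section
/- Let q = 2^{2e+1} with e ≥ 1, σ = 2^{e+1}, and let C be the binary code C = { ((Tr_{q/2}(ux + vy + w(x^σ + xy + y^{σ+2})) + h)_{(x,y)∈GF(q)²}, Tr_{q/2}(w)) : u,v,w ∈ GF(q), h ∈ GF(2) }. Then C has length 2^{4e+2}+1 and dimension 6e+4, and its nonzero weights all lie in {2^{4e+2}, 2^{4e+1}, 2^{4e+1} ± 2^{2e}, 2^{4e+1} ± 2^{2e} + 1}. -/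
open Finset

namespace Stmt18Aux

/-- The additive character of `ZMod 2` with values in `ℤ`. -/
def chi (t : ZMod 2) : ℤ := if t = 0 then 1 else -1

lemma chi_add : ∀ a b : ZMod 2, chi (a + b) = chi a * chi b := by decide

lemma chi_zero : chi 0 = 1 := rfl

lemma chi_cases : ∀ a : ZMod 2, chi a = 1 ∨ chi a = -1 := by decide

lemma zmod2_add_self : ∀ t : ZMod 2, t + t = 0 := by decide

lemma zmod2_cases : ∀ t : ZMod 2, t = 0 ∨ t = 1 := by decide

variable {F : Type*} [Field F] [Fintype F] [DecidableEq F] [Algebra (ZMod 2) F]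

lemma trace_nondeg {c : F} (h : ∀ x, Algebra.trace (ZMod 2) F (c * x) = 0) : c = 0 :=
  (traceForm_nondegenerate (ZMod 2) F).1 c (fun y => h y)

lemma sum_chi (c : F) :
    ∑ x : F, chi (Algebra.trace (ZMod 2) F (c * x))
      = if c = 0 then (Fintype.card F : ℤ) else 0 := by
  split_ifs with hc
  · subst hc; simp [chi]
  · have hb : ∃ b, Algebra.trace (ZMod 2) F (c * b) ≠ 0 := by
      by_contra hx; push_neg at hx; exact hc (trace_nondeg hx)
    obtain ⟨b, hb⟩ := hb
    have hb1 : Algebra.trace (ZMod 2) F (c * b) = 1 := by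
      rcases zmod2_cases (Algebra.trace (ZMod 2) F (c * b)) with h | h
      · exact absurd h hb
      · exact h
    have hneg : ∀ t : ZMod 2, chi (t + 1) = - chi t := by decide
    have step : ∑ x : F, chi (Algebra.trace (ZMod 2) F (c * x))
        = ∑ x : F, chi (Algebra.trace (ZMod 2) F (c * (x + b))) :=
      (Fintype.sum_equiv (Equiv.addRight b)
        (fun x => chi (Algebra.trace (ZMod 2) F (c * (x + b))))
        (fun x => chi (Algebra.trace (ZMod 2) F (c * x)))
        (fun x => rfl)).symm
    have step2 : ∑ x : F, chi (Algebra.trace (ZMod 2) F (c * (x + b)))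
        = - ∑ x : F, chi (Algebra.trace (ZMod 2) F (c * x)) := by
      rw [← Finset.sum_neg_distrib]
      refine Finset.sum_congr rfl fun x _ => ?_
      rw [mul_add, map_add, hb1]
      exact hneg _
    linarith [step.trans step2]

/-- The key "bent function" lemma: the exponential sum attached to the Tits ovoid
function has square `q²` whenever `w ≠ 0`. -/
lemma bent (m : ℕ) (u v w : F) (hw : w ≠ 0) :
    (∑ p : F × F, chi (Algebra.trace (ZMod 2) F
        (u * p.1 + v * p.2 + w * (p.1 ^ 2 ^ (m + 1) + p.1 * p.2 + p.2 ^ (2 ^ (m + 1) + 2))))) ^ 2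
      = (Fintype.card F : ℤ) ^ 2 := by
  haveI : CharP F 2 := charP_of_injective_algebraMap (algebraMap (ZMod 2) F).injective 2
  set sn : ℕ := 2 ^ (m + 1) with hsn
  set T : F →ₗ[ZMod 2] ZMod 2 := Algebra.trace (ZMod 2) F with hT
  set f : F × F → ZMod 2 :=
    fun p => T (u * p.1 + v * p.2 + w * (p.1 ^ sn + p.1 * p.2 + p.2 ^ (sn + 2))) with hf
  -- auxiliary function appearing in the difference
  set K : F → F → F → F := fun a b y =>
    u * a + v * b + w * (a ^ sn + a * y + a * b + y ^ sn * b ^ 2 + b ^ sn * y ^ 2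
      + b ^ sn * b ^ 2) with hK
  have elem : ∀ a b x y : F,
      u * (x + a) + v * (y + b) + w * ((x + a) ^ sn + (x + a) * (y + b) + (y + b) ^ (sn + 2))
        = (u * x + v * y + w * (x ^ sn + x * y + y ^ (sn + 2))) + (w * (b * x) + K a b y) := by
    intro a b x y
    have h1 : (x + a) ^ sn = x ^ sn + a ^ sn := by
      rw [hsn]; exact add_pow_char_pow x a 2 (m + 1)
    have h2 : (y + b) ^ (sn + 2) = (y ^ sn + b ^ sn) * (y ^ 2 + b ^ 2) := by
      have hbs : (y + b) ^ sn = y ^ sn + b ^ sn := by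
        rw [hsn]; exact add_pow_char_pow y b 2 (m + 1)
      have hb2 : (y + b) ^ (2 : ℕ) = y ^ 2 + b ^ 2 := add_pow_char y b 2
      rw [pow_add, hbs, hb2]
    have h3 : y ^ (sn + 2) = y ^ sn * y ^ 2 := by rw [pow_add]
    rw [h1, h2, h3, hK]
    ring
  have key : ∀ d p : F × F,
      chi (f (p + d) + f p) = chi (T (w * (d.2 * p.1))) * chi (T (K d.1 d.2 p.2)) := by
    rintro ⟨a, b⟩ ⟨x, y⟩
    have hfe : f ((x, y) + (a, b)) = f (x, y) + (T (w * (b * x)) + T (K a b y)) := by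
      show T _ = T _ + (T _ + T _)
      rw [← map_add, ← map_add]
      exact congrArg T (by simpa using elem a b x y)
    rw [hfe]
    have hcancel : ∀ s t : ZMod 2, s + t + s = t := by decide
    rw [show f (x, y) + (T (w * (b * x)) + T (K a b y)) + f (x, y)
        = T (w * (b * x)) + T (K a b y) from by
      have := hcancel (f (x, y)) (T (w * (b * x)) + T (K a b y)); linear_combination this]
    exact chi_add _ _
  have step1 : (∑ p : F × F, chi (f p)) ^ 2
      = ∑ d : F × F, ∑ p : F × F, chi (f (p + d) + f p) := by
    rw [sq, Finset.sum_mul_sum]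
    have : ∀ p : F × F, ∑ p' : F × F, chi (f p) * chi (f p')
        = ∑ d : F × F, chi (f (p + d) + f p) := by
      intro p
      refine ((Fintype.sum_equiv (Equiv.addLeft p)
        (fun d => chi (f (p + d) + f p)) (fun p' => chi (f p) * chi (f p')) ?_)).symm
      intro d
      simp only [Equiv.coe_addLeft]
      rw [chi_add, mul_comm]
    rw [Finset.sum_congr rfl fun p _ => this p, Finset.sum_comm]
  have inner0 : ∑ p : F × F, chi (f (p + 0) + f p) = (Fintype.card F : ℤ) ^ 2 := by
    have : ∀ p : F × F, chi (f (p + 0) + f p) = 1 := by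
      intro p; rw [add_zero, zmod2_add_self, chi_zero]
    rw [Finset.sum_congr rfl fun p _ => this p, Finset.sum_const]
    simp [Fintype.card_prod, sq]
  have innerne : ∀ d : F × F, d ≠ 0 → ∑ p : F × F, chi (f (p + d) + f p) = 0 := by
    rintro ⟨a, b⟩ hd
    have hsum : ∑ p : F × F, chi (f (p + (a, b)) + f p)
        = (∑ x : F, chi (T (w * b * x))) * (∑ y : F, chi (T (K a b y))) := by
      rw [Finset.sum_mul_sum, Fintype.sum_prod_type]
      refine Finset.sum_congr rfl fun x _ => Finset.sum_congr rfl fun y _ => ?_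
      rw [key (a, b) (x, y)]
      rw [mul_assoc]
    rw [hsum]
    by_cases hb : b = 0
    · subst hb
      have ha : a ≠ 0 := by
        intro h; exact hd (by simp [h, Prod.ext_iff])
      have hK0 : ∀ y : F, K a 0 y = (u * a + w * a ^ sn) + w * a * y := by
        intro y
        rw [hK]
        have h0 : (0 : F) ^ sn = 0 := zero_pow (by positivity)
        simp only [h0]
        ring
      have : ∑ y : F, chi (T (K a 0 y))
          = chi (T (u * a + w * a ^ sn)) * ∑ y : F, chi (T (w * a * y)) := by
        rw [Finset.mul_sum]
        refine Finset.sum_congr rfl fun y _ => ?_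
        rw [hK0 y, map_add, chi_add]
      rw [this, sum_chi (w * a), if_neg (mul_ne_zero hw ha)]
      ring
    · rw [show (∑ x : F, chi (T (w * b * x))) = 0 from by
        rw [sum_chi (w * b), if_neg (mul_ne_zero hw hb)], zero_mul]
  rw [show (∑ p : F × F, chi (Algebra.trace (ZMod 2) F
        (u * p.1 + v * p.2 + w * (p.1 ^ 2 ^ (m + 1) + p.1 * p.2 + p.2 ^ (2 ^ (m + 1) + 2)))))
      = ∑ p : F × F, chi (f p) from rfl]
  rw [step1, Fintype.sum_eq_single (0 : F × F) innerne, inner0]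

/-- Counting by character sums. -/
lemma two_mul_card {α : Type*} [Fintype α] (g : α → ZMod 2) :
    2 * ((univ.filter fun a => g a ≠ 0).card : ℤ)
      = (Fintype.card α : ℤ) - ∑ a, chi (g a) := by
  classical
  have hchi : ∀ t : ZMod 2, chi t = 1 - 2 * (if t ≠ 0 then (1 : ℤ) else 0) := by decide
  have : ∑ a, chi (g a) = ∑ a : α, (1 - 2 * (if g a ≠ 0 then (1 : ℤ) else 0)) :=
    Finset.sum_congr rfl fun a _ => hchi _
  rw [this, Finset.sum_sub_distrib, Finset.sum_const, ← Finset.mul_sum, Finset.card_filter,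
    Finset.card_univ]
  push_cast
  ring

lemma hammingNorm_sum_elim {α : Type*} [Fintype α] [DecidableEq α]
    (g1 : α → ZMod 2) (g2 : Unit → ZMod 2) :
    hammingNorm (Sum.elim g1 g2) = hammingNorm g1 + if g2 () ≠ 0 then 1 else 0 := by
  classical
  simp [hammingNorm, Finset.card_filter, Fintype.sum_sum_type]
  convert rfl <;> congr


/-- Counting by character sums, in terms of the Hamming norm. -/
lemma two_mul_hammingNorm {α : Type*} [Fintype α] (g : α → ZMod 2) :
    2 * (hammingNorm g : ℤ) = (Fintype.card α : ℤ) - ∑ a, chi (g a) := by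
  classical
  have hchi : ∀ t : ZMod 2, chi t = 1 - 2 * (if t ≠ 0 then (1 : ℤ) else 0) := by decide
  have h2 : ∑ a, chi (g a) = ∑ a : α, (1 - 2 * (if g a ≠ 0 then (1 : ℤ) else 0)) :=
    Finset.sum_congr rfl fun a _ => hchi _
  simp only [hammingNorm]
  rw [Finset.card_filter, h2, Finset.sum_sub_distrib, Finset.sum_const, ← Finset.mul_sum,
    Finset.card_univ]
  push_cast
  ring

/-- The weight of any nonzero codeword lies in the prescribed set. -/
lemma weight_mem (e : ℕ) {F : Type*} [Field F] [Fintype F] [DecidableEq F]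
    [Algebra (ZMod 2) F] (hcard : Fintype.card F = 2 ^ (2 * e + 1)) (u v w : F) (h : ZMod 2)
    (hc0 : Sum.elim (fun xy : F × F => Algebra.trace (ZMod 2) F
          (u * xy.1 + v * xy.2 +
            w * (xy.1 ^ 2 ^ (e + 1) + xy.1 * xy.2 + xy.2 ^ (2 ^ (e + 1) + 2))) + h)
        (fun _ : Unit => Algebra.trace (ZMod 2) F w) ≠ 0) :
    hammingNorm (Sum.elim (fun xy : F × F => Algebra.trace (ZMod 2) F
          (u * xy.1 + v * xy.2 +
            w * (xy.1 ^ 2 ^ (e + 1) + xy.1 * xy.2 + xy.2 ^ (2 ^ (e + 1) + 2))) + h)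
        (fun _ : Unit => Algebra.trace (ZMod 2) F w)) ∈
      ({2 ^ (4 * e + 2), 2 ^ (4 * e + 1),
        2 ^ (4 * e + 1) + 2 ^ (2 * e), 2 ^ (4 * e + 1) - 2 ^ (2 * e),
        2 ^ (4 * e + 1) + 2 ^ (2 * e) + 1, 2 ^ (4 * e + 1) - 2 ^ (2 * e) + 1} : Set ℕ) := by
  classical
  haveI : CharP F 2 := charP_of_injective_algebraMap (algebraMap (ZMod 2) F).injective 2
  set g1 : F × F → ZMod 2 := fun xy => Algebra.trace (ZMod 2) F
      (u * xy.1 + v * xy.2 +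
        w * (xy.1 ^ 2 ^ (e + 1) + xy.1 * xy.2 + xy.2 ^ (2 ^ (e + 1) + 2))) + h with hg1
  rw [hammingNorm_sum_elim]
  set S : ℤ := ∑ p : F × F, chi (Algebra.trace (ZMod 2) F
      (u * p.1 + v * p.2 +
        w * (p.1 ^ 2 ^ (e + 1) + p.1 * p.2 + p.2 ^ (2 ^ (e + 1) + 2)))) with hS
  have hcF : (Fintype.card F : ℤ) = 2 ^ (2 * e + 1) := by rw [hcard]; push_cast; ring
  have hc2 : (Fintype.card (F × F) : ℤ) = 2 * 2 ^ (4 * e + 1) := by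
    rw [Fintype.card_prod]
    push_cast
    rw [hcF, ← pow_add, show 2 * e + 1 + (2 * e + 1) = 4 * e + 1 + 1 from by omega, pow_succ]
    ring
  have hqsplit : (2 : ℤ) ^ (2 * e + 1) = 2 * 2 ^ (2 * e) := by rw [pow_succ]; ring
  have hp1 : (2 : ℤ) ^ (4 * e + 2) = 2 * 2 ^ (4 * e + 1) := by
    rw [show 4 * e + 2 = 4 * e + 1 + 1 from by omega, pow_succ]; ring
  have hle : (2 : ℕ) ^ (2 * e) ≤ 2 ^ (4 * e + 1) :=
    Nat.pow_le_pow_right (by norm_num) (by omega)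
  have hkey : 2 * (hammingNorm g1 : ℤ) = (Fintype.card (F × F) : ℤ) - S * chi h := by
    rw [two_mul_hammingNorm]
    congr 1
    rw [hS, Finset.sum_mul]
    refine Finset.sum_congr rfl fun p _ => ?_
    rw [hg1]
    exact chi_add _ _
  by_cases hw : w = 0
  · subst hw
    have hfactor : S = (∑ x : F, chi (Algebra.trace (ZMod 2) F (u * x)))
        * (∑ y : F, chi (Algebra.trace (ZMod 2) F (v * y))) := by
      rw [hS, Finset.sum_mul_sum, Fintype.sum_prod_type]
      refine Finset.sum_congr rfl fun x _ => Finset.sum_congr rfl fun y _ => ?_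
      rw [show (u * x + v * y + 0 * (x ^ 2 ^ (e + 1) + x * y + y ^ (2 ^ (e + 1) + 2)))
          = u * x + v * y from by ring, map_add]
      exact chi_add _ _
    by_cases huv : u = 0 ∧ v = 0
    · obtain ⟨hu, hv⟩ := huv
      subst hu; subst hv
      have hh1 : h = 1 := by
        rcases zmod2_cases h with h0 | h1
        · exfalso
          apply hc0
          subst h0
          funext i
          rcases i with p | un <;> simp [hg1]
        · exact h1
      subst hh1
      have hSv : S = 2 * 2 ^ (4 * e + 1) := by
        have h1 : ∑ x : F, chi (Algebra.trace (ZMod 2) F ((0 : F) * x))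
            = (Fintype.card F : ℤ) := by
          rw [sum_chi]
          simp
        rw [hfactor, h1, hcF, ← pow_add,
          show 2 * e + 1 + (2 * e + 1) = 4 * e + 1 + 1 from by omega, pow_succ]
        ring
      have hchi1 : chi (1 : ZMod 2) = -1 := rfl
      have hn : hammingNorm g1 = 2 ^ (4 * e + 2) := by
        have h0 := hkey
        rw [hSv, hchi1, hc2] at h0
        zify
        linarith
      rw [hn]
      simp [Set.mem_insert_iff]
    · have hSv : S = 0 := by
        rcases not_and_or.mp huv with hu | hv
        · have h1 : ∑ x : F, chi (Algebra.trace (ZMod 2) F (u * x)) = 0 := by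
            rw [sum_chi]; simp [hu]
          rw [hfactor, h1, zero_mul]
        · have h1 : ∑ y : F, chi (Algebra.trace (ZMod 2) F (v * y)) = 0 := by
            rw [sum_chi]; simp [hv]
          rw [hfactor, h1, mul_zero]
      have hn : hammingNorm g1 = 2 ^ (4 * e + 1) := by
        have h0 := hkey
        rw [hSv, hc2, zero_mul] at h0
        zify
        linarith
      rw [hn]
      simp [Set.mem_insert_iff]
  · have hbent := bent e u v w hw
    rw [← hS] at hbent
    have hS2 : S ^ 2 = ((2 : ℤ) ^ (2 * e + 1)) ^ 2 := by rw [hbent, hcF]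
    have hSpm : S = 2 ^ (2 * e + 1) ∨ S = -2 ^ (2 * e + 1) := by
      have hfac : (S - 2 ^ (2 * e + 1)) * (S + 2 ^ (2 * e + 1)) = 0 := by
        linear_combination hS2
      rcases mul_eq_zero.mp hfac with h1 | h1
      · left; linarith
      · right; linarith
    have hn : hammingNorm g1 = 2 ^ (4 * e + 1) + 2 ^ (2 * e)
        ∨ hammingNorm g1 = 2 ^ (4 * e + 1) - 2 ^ (2 * e) := by
      rcases hSpm with h1 | h1 <;> rcases chi_cases h with h3 | h3
      · right
        have h0 := hkey
        rw [h1, h3, hc2, mul_one] at h0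
        zify [hle]
        linarith
      · left
        have h0 := hkey
        rw [h1, h3, hc2] at h0
        zify
        linarith
      · left
        have h0 := hkey
        rw [h1, h3, hc2, mul_one] at h0
        zify
        linarith
      · right
        have h0 := hkey
        rw [h1, h3, hc2] at h0
        zify [hle]
        linarith
    by_cases hTw : Algebra.trace (ZMod 2) F w = 0 <;>
      rcases hn with h1 | h1 <;> rw [h1] <;> simp [hTw, Set.mem_insert_iff]

/-- The linear map parametrizing the code. -/
noncomputable def codeMap (F : Type*) [Field F] [Fintype F] [Algebra (ZMod 2) F] (sn : ℕ) :
    (F × F × F × ZMod 2) →ₗ[ZMod 2] (((F × F) ⊕ Unit) → ZMod 2) where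
  toFun m := Sum.elim
    (fun xy : F × F => Algebra.trace (ZMod 2) F
      (m.1 * xy.1 + m.2.1 * xy.2 +
        m.2.2.1 * (xy.1 ^ sn + xy.1 * xy.2 + xy.2 ^ (sn + 2))) + m.2.2.2)
    (fun _ : Unit => Algebra.trace (ZMod 2) F m.2.2.1)
  map_add' m m' := by
    funext i
    rcases i with p | u
    · show Algebra.trace (ZMod 2) F _ + _ = (Algebra.trace (ZMod 2) F _ + _) + (Algebra.trace (ZMod 2) F _ + _)
      rw [show ((m + m').1 * p.1 + (m + m').2.1 * p.2 +
          (m + m').2.2.1 * (p.1 ^ sn + p.1 * p.2 + p.2 ^ (sn + 2)))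
          = (m.1 * p.1 + m.2.1 * p.2 + m.2.2.1 * (p.1 ^ sn + p.1 * p.2 + p.2 ^ (sn + 2)))
            + (m'.1 * p.1 + m'.2.1 * p.2 + m'.2.2.1 * (p.1 ^ sn + p.1 * p.2 + p.2 ^ (sn + 2)))
          from by simp only [Prod.fst_add, Prod.snd_add]; ring, map_add]
      show _ + ((m + m').2.2.2) = _
      simp only [Prod.snd_add]
      ring
    · show Algebra.trace (ZMod 2) F _ = Algebra.trace (ZMod 2) F _ + Algebra.trace (ZMod 2) F _
      rw [← map_add]
      rfl
  map_smul' r m := by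
    rcases zmod2_cases r with h | h <;> subst h
    · funext i
      rcases i with p | u <;>
        simp [Sum.elim]
    · simp

end Stmt18Aux

open Stmt18Aux

/-- The binary subfield code of the Tits ovoid code (`q = 2^(2e+1)`, `σ = 2^(e+1)`) has
length `2^(4e+2)+1`, dimension `6e+4`, and all its nonzero weights lie in
`{2^(4e+2), 2^(4e+1), 2^(4e+1) ± 2^(2e), 2^(4e+1) ± 2^(2e) + 1}`. -/
theorem stmt18 (e : ℕ) (he : 1 ≤ e) {F : Type*} [Field F] [Fintype F] [DecidableEq F]
    [Algebra (ZMod 2) F] (hcard : Fintype.card F = 2 ^ (2 * e + 1))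
    (C : Set ((F × F) ⊕ Unit → ZMod 2))
    (hC : C = {c | ∃ (u v w : F) (h : ZMod 2), c = Sum.elim
        (fun xy : F × F => Algebra.trace (ZMod 2) F
          (u * xy.1 + v * xy.2 +
            w * (xy.1 ^ (2 ^ (e + 1)) + xy.1 * xy.2 + xy.2 ^ (2 ^ (e + 1) + 2))) + h)
        (fun _ : Unit => Algebra.trace (ZMod 2) F w)}) :
    Nat.card ((F × F) ⊕ Unit) = 2 ^ (4 * e + 2) + 1 ∧
    (∃ S : Submodule (ZMod 2) ((F × F) ⊕ Unit → ZMod 2),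
      (S : Set ((F × F) ⊕ Unit → ZMod 2)) = C ∧ Module.finrank (ZMod 2) S = 6 * e + 4) ∧
    (∀ c ∈ C, c ≠ 0 → hammingNorm c ∈
      ({2 ^ (4 * e + 2), 2 ^ (4 * e + 1),
        2 ^ (4 * e + 1) + 2 ^ (2 * e), 2 ^ (4 * e + 1) - 2 ^ (2 * e),
        2 ^ (4 * e + 1) + 2 ^ (2 * e) + 1, 2 ^ (4 * e + 1) - 2 ^ (2 * e) + 1} : Set ℕ)) := by
  haveI : CharP F 2 := charP_of_injective_algebraMap (algebraMap (ZMod 2) F).injective 2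
  have hsnpos : (0 : ℕ) < 2 ^ (e + 1) := by positivity
  -- length
  have hlen : Nat.card ((F × F) ⊕ Unit) = 2 ^ (4 * e + 2) + 1 := by
    rw [Nat.card_eq_fintype_card, Fintype.card_sum, Fintype.card_prod, hcard,
      Fintype.card_unit, ← pow_add]
    congr 2
    omega
  refine ⟨hlen, ?_, ?_⟩
  · -- dimension
    have hsn0 : (2 : ℕ) ^ (e + 1) ≠ 0 := by positivity
    have h2F : (2 : F) = 0 := by
      have := CharP.cast_eq_zero F 2
      exact_mod_cast this
    set L := codeMap F (2 ^ (e + 1)) with hLdef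
    have hinj : Function.Injective L := by
      rw [← LinearMap.ker_eq_bot, LinearMap.ker_eq_bot']
      rintro ⟨u, v, w, h⟩ hm
      have hP : ∀ x y : F, Algebra.trace (ZMod 2) F
          (u * x + v * y + w * (x ^ 2 ^ (e + 1) + x * y + y ^ (2 ^ (e + 1) + 2))) + h = 0 :=
        fun x y => congrFun hm (Sum.inl (x, y))
      have hh : h = 0 := by
        have h00 := hP 0 0
        rw [show (u * 0 + v * 0 + w * ((0:F) ^ 2 ^ (e + 1) + 0 * 0 + (0:F) ^ (2 ^ (e + 1) + 2)))
            = 0 from by rw [zero_pow hsn0, zero_pow (by positivity)]; ring, map_zero,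
          zero_add] at h00
        exact h00
      have hP' : ∀ x y : F, Algebra.trace (ZMod 2) F
          (u * x + v * y + w * (x ^ 2 ^ (e + 1) + x * y + y ^ (2 ^ (e + 1) + 2))) = 0 := by
        intro x y
        have := hP x y
        rwa [hh, add_zero] at this
      have A1 : ∀ x : F, Algebra.trace (ZMod 2) F (u * x + w * x ^ 2 ^ (e + 1)) = 0 := by
        intro x
        have := hP' x 0
        rwa [show (u * x + v * 0 + w * (x ^ 2 ^ (e + 1) + x * 0 + (0:F) ^ (2 ^ (e + 1) + 2)))
            = u * x + w * x ^ 2 ^ (e + 1) from by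
          rw [zero_pow (by positivity : 2 ^ (e + 1) + 2 ≠ 0)]; ring] at this
      have A2 : ∀ x : F, Algebra.trace (ZMod 2) F
          (u * x + v + w * (x ^ 2 ^ (e + 1) + x + 1)) = 0 := by
        intro x
        have := hP' x 1
        rwa [show (u * x + v * 1 + w * (x ^ 2 ^ (e + 1) + x * 1 + (1:F) ^ (2 ^ (e + 1) + 2)))
            = u * x + v + w * (x ^ 2 ^ (e + 1) + x + 1) from by rw [one_pow]; ring] at this
      have A3 : Algebra.trace (ZMod 2) F (v + w) = 0 := by
        have := hP' 0 1
        rwa [show (u * 0 + v * 1 + w * ((0:F) ^ 2 ^ (e + 1) + 0 * 1 + (1:F) ^ (2 ^ (e + 1) + 2)))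
            = v + w from by rw [zero_pow hsn0, one_pow]; ring] at this
      have hw0 : w = 0 := by
        apply trace_nondeg
        intro x
        have harg : w * x = (u * x + w * x ^ 2 ^ (e + 1))
            + ((u * x + v + w * (x ^ 2 ^ (e + 1) + x + 1)) + (v + w)) := by
          linear_combination (-(u * x) - w * x ^ 2 ^ (e + 1) - v - w) * h2F
        rw [harg, map_add, A1 x, map_add, A2 x, A3]
        simp
      have hu0 : u = 0 := by
        apply trace_nondeg
        intro x
        have := A1 x
        rwa [hw0, zero_mul, add_zero] at this
      have hv0 : v = 0 := by
        apply trace_nondeg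
        intro y
        have := hP' 0 y
        rwa [hw0, hu0, show ((0:F) * 0 + v * y + 0 * ((0:F) ^ 2 ^ (e + 1) + 0 * y
            + y ^ (2 ^ (e + 1) + 2))) = v * y from by ring] at this
      simp [hu0, hv0, hw0, hh, Prod.ext_iff]
    refine ⟨LinearMap.range L, ?_, ?_⟩
    · ext c
      simp only [SetLike.mem_coe, LinearMap.mem_range, hC, Set.mem_setOf_eq]
      constructor
      · rintro ⟨⟨u, v, w, h⟩, rfl⟩
        exact ⟨u, v, w, h, rfl⟩
      · rintro ⟨u, v, w, h, rfl⟩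
        exact ⟨⟨u, v, w, h⟩, rfl⟩
    · rw [LinearMap.finrank_range_of_inj hinj]
      have hF : Module.finrank (ZMod 2) F = 2 * e + 1 := by
        have h1 : Fintype.card F = 2 ^ Module.finrank (ZMod 2) F := by
          have := Module.card_eq_pow_finrank (K := ZMod 2) (V := F)
          simpa using this
        rw [hcard] at h1
        exact (Nat.pow_right_injective (le_refl 2) h1).symm
      rw [Module.finrank_prod, Module.finrank_prod, Module.finrank_prod, hF,
        Module.finrank_self]
      omega
  · -- weights
    intro c hc hc0
    rw [hC] at hc
    obtain ⟨u, v, w, h, rfl⟩ := hc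
    exact weight_mem e hcard u v w h hc0
end
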